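/- arXiv:hep-th/9711139 — 9 statements merged into one kernel-verified Lean document; each statement's English description precedes it below -/
import Mathlib

section
/- Let ρ > 0 and let Δ : ℕ → ℝ be a sequence with Δ_n > 1 for all n. If the series ∑_n 1/(Δ_n·√(ln Δ_n)) converges, then the set Z_ρ({Δ_n}) := { x ∈ ℝ^ℕ : there exists N ∈ ℕ such that |x_n| < √(2ρ·ln Δ_n) for all n ≥ N } has μ_ρ-measure one. -/
open MeasureTheory ProbabilityTheory
open scoped NNReal ENNReal

/-- A measure `μ` on `ℝ^ℕ` (with the product σ-algebra) is the countable product of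
identical Gaussian measures of mean `0` and variance `ρ` iff all its finite-dimensional
marginals are the corresponding products of Gaussians.  This property determines the
measure uniquely on the product σ-algebra. -/
def IsProductGaussian (ρ : ℝ≥0) (μ : Measure (ℕ → ℝ)) : Prop :=
  ∀ (s : Finset ℕ) (A : ℕ → Set ℝ), (∀ i ∈ s, MeasurableSet (A i)) →
    μ {x : ℕ → ℝ | ∀ i ∈ s, x i ∈ A i} = ∏ i ∈ s, gaussianReal 0 ρ (A i)

open Filter Set Real in
lemma my_integral_mul_exp_neg_mul_sq_Ioi {b : ℝ} (hb : 0 < b) (a : ℝ) :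
    ∫ x in Set.Ioi a, x * Real.exp (-b * x ^ 2) = (2 * b)⁻¹ * Real.exp (-b * a ^ 2) := by
  have hb' : b ≠ 0 := hb.ne'
  have A : ∀ x : ℝ, HasDerivAt (fun x => -(2 * b)⁻¹ * Real.exp (-b * x ^ 2))
      (x * Real.exp (-b * x ^ 2)) x := by
    intro x
    convert ((hasDerivAt_pow 2 x).const_mul (-b)).exp.const_mul (-(2 * b)⁻¹) using 1
    rfl
    rfl
    field_simp
    ring
  have B : Tendsto (fun y : ℝ ↦ -(2 * b)⁻¹ * Real.exp (-b * y ^ 2)) atTop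
      (nhds (-(2 * b)⁻¹ * 0)) := by
    refine Tendsto.const_mul _ ?_
    exact Real.tendsto_exp_atBot.comp
      ((tendsto_pow_atTop two_ne_zero).const_mul_atTop_of_neg (neg_lt_zero.2 hb))
  have := integral_Ioi_of_hasDerivAt_of_tendsto' (a := a) (fun x _ => A x)
    (integrable_mul_exp_neg_mul_sq hb).integrableOn B
  rw [this]
  ring

open Filter Set Real in
lemma my_exp_tail_bound {b : ℝ} (hb : 0 < b) {a : ℝ} (ha : 0 < a) :
    ∫ x in Set.Ioi a, Real.exp (-b * x ^ 2) ≤ a⁻¹ * ((2 * b)⁻¹ * Real.exp (-b * a ^ 2)) := by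
  have h1 : ∫ x in Set.Ioi a, Real.exp (-b * x ^ 2)
      ≤ ∫ x in Set.Ioi a, a⁻¹ * (x * Real.exp (-b * x ^ 2)) := by
    refine setIntegral_mono_on (integrable_exp_neg_mul_sq hb).integrableOn
      (((integrable_mul_exp_neg_mul_sq hb).const_mul a⁻¹).integrableOn)
      measurableSet_Ioi ?_
    intro x hx
    have hx' : a ≤ x := (le_of_lt hx)
    have h2 : (1 : ℝ) ≤ a⁻¹ * x := by
      rw [← inv_mul_cancel₀ ha.ne']
      exact mul_le_mul_of_nonneg_left hx' (by positivity)
    calc Real.exp (-b * x ^ 2) = 1 * Real.exp (-b * x ^ 2) := (one_mul _).symm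
      _ ≤ (a⁻¹ * x) * Real.exp (-b * x ^ 2) :=
          mul_le_mul_of_nonneg_right h2 (Real.exp_pos _).le
      _ = a⁻¹ * (x * Real.exp (-b * x ^ 2)) := by ring
  rw [integral_const_mul, my_integral_mul_exp_neg_mul_sq_Ioi hb] at h1
  exact h1

open Filter Set Real in
lemma my_gaussian_tail (v : ℝ≥0) (hv : v ≠ 0) {a : ℝ} (ha : 0 < a) :
    gaussianReal 0 v {y : ℝ | a ≤ |y|} ≤
      ENNReal.ofReal (2 * ((Real.sqrt (2 * Real.pi * v))⁻¹ *
        (a⁻¹ * ((2 * (2 * (v : ℝ))⁻¹)⁻¹ * Real.exp (-(2 * (v : ℝ))⁻¹ * a ^ 2))))) := by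
  have hv' : (0 : ℝ) < v := lt_of_le_of_ne (v.coe_nonneg) (by exact_mod_cast hv.symm)
  set b : ℝ := (2 * (v : ℝ))⁻¹ with hbdef
  have hb : 0 < b := by positivity
  set c : ℝ := (Real.sqrt (2 * Real.pi * v))⁻¹ with hcdef
  have hc : 0 ≤ c := by positivity
  have hpdf : ∀ y : ℝ, gaussianPDFReal 0 v y = c * Real.exp (-b * y ^ 2) := by
    intro y
    rw [gaussianPDFReal]
    congr 1
    rw [sub_zero]
    rw [hbdef]
    field_simp
  set D : ℝ := c * (a⁻¹ * ((2 * b)⁻¹ * Real.exp (-b * a ^ 2))) with hDdef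
  have hD : 0 ≤ D := by positivity
  have hIci : gaussianReal 0 v (Set.Ici a) ≤ ENNReal.ofReal D := by
    rw [gaussianReal_apply_eq_integral 0 hv]
    refine ENNReal.ofReal_le_ofReal ?_
    simp_rw [hpdf]
    rw [integral_Ici_eq_integral_Ioi, integral_const_mul]
    exact mul_le_mul_of_nonneg_left (my_exp_tail_bound hb ha) hc
  have hIic : gaussianReal 0 v (Set.Iic (-a)) ≤ ENNReal.ofReal D := by
    rw [gaussianReal_apply_eq_integral 0 hv]
    refine ENNReal.ofReal_le_ofReal ?_
    simp_rw [hpdf]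
    have hsym : ∫ y in Set.Iic (-a), c * Real.exp (-b * y ^ 2)
        = ∫ y in Set.Ioi a, c * Real.exp (-b * y ^ 2) := by
      rw [← integral_comp_neg_Ioi]
      congr 1
      ext y
      rw [neg_pow, pow_two, pow_two]
      ring_nf
    rw [hsym, integral_const_mul]
    exact mul_le_mul_of_nonneg_left (my_exp_tail_bound hb ha) hc
  have hsub : {y : ℝ | a ≤ |y|} ⊆ Set.Iic (-a) ∪ Set.Ici a := by
    intro y hy
    simp only [Set.mem_setOf_eq] at hy
    rcases le_abs.mp hy with h | h
    · exact Or.inr h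
    · exact Or.inl (le_neg.mp h)
  calc gaussianReal 0 v {y : ℝ | a ≤ |y|}
      ≤ gaussianReal 0 v (Set.Iic (-a) ∪ Set.Ici a) := measure_mono hsub
    _ ≤ gaussianReal 0 v (Set.Iic (-a)) + gaussianReal 0 v (Set.Ici a) := measure_union_le _ _
    _ ≤ ENNReal.ofReal D + ENNReal.ofReal D := add_le_add hIic hIci
    _ = ENNReal.ofReal (D + D) := (ENNReal.ofReal_add hD hD).symm
    _ = ENNReal.ofReal (2 * (c * (a⁻¹ * ((2 * b)⁻¹ * Real.exp (-b * a ^ 2))))) := by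
        rw [hDdef]; ring_nf

theorem gaussian_product_measure_of_summable (ρ : ℝ≥0) (hρ : 0 < ρ)
    (μ : Measure (ℕ → ℝ)) (hμ : IsProductGaussian ρ μ)
    (Δ : ℕ → ℝ) (hΔ : ∀ n, 1 < Δ n)
    (hsum : Summable fun n => 1 / (Δ n * Real.sqrt (Real.log (Δ n)))) :
    μ {x : ℕ → ℝ | ∃ N : ℕ, ∀ n ≥ N, |x n| < Real.sqrt (2 * ρ * Real.log (Δ n))} = 1 := by
  have hρ' : (0 : ℝ) < ρ := by exact_mod_cast hρ
  set a : ℕ → ℝ := fun n => Real.sqrt (2 * ρ * Real.log (Δ n)) with hadef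
  have hΔ0 : ∀ n, (0 : ℝ) < Δ n := fun n => lt_trans one_pos (hΔ n)
  have hlog : ∀ n, 0 < Real.log (Δ n) := fun n => Real.log_pos (hΔ n)
  have ha : ∀ n, 0 < a n := fun n => Real.sqrt_pos.mpr (mul_pos (mul_pos two_pos hρ') (hlog n))
  set s : ℕ → Set (ℕ → ℝ) := fun n => {x : ℕ → ℝ | a n ≤ |x n|} with hsdef
  -- μ is a probability measure
  have huniv : μ Set.univ = 1 := by
    have := hμ ∅ (fun _ => Set.univ) (by simp)
    simpa using this
  haveI : IsProbabilityMeasure μ := ⟨huniv⟩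
  -- marginals
  have hmarg : ∀ n, μ (s n) = gaussianReal 0 ρ {y : ℝ | a n ≤ |y|} := by
    intro n
    have hA : ∀ i ∈ ({n} : Finset ℕ), MeasurableSet {y : ℝ | a n ≤ |y|} :=
      fun i _ => measurableSet_le measurable_const measurable_id.abs
    have := hμ {n} (fun _ => {y : ℝ | a n ≤ |y|}) hA
    simpa using this
  -- summable bound
  set C : ℝ := 2 * ((Real.sqrt (2 * Real.pi * ρ))⁻¹ * ((Real.sqrt (2 * ρ))⁻¹ * ρ)) with hCdef
  have hC : 0 ≤ C := by positivity
  have key : ∀ n, μ (s n) ≤ ENNReal.ofReal (C * (1 / (Δ n * Real.sqrt (Real.log (Δ n))))) := by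
    intro n
    rw [hmarg n]
    refine le_trans (my_gaussian_tail ρ hρ.ne' (ha n)) (ENNReal.ofReal_le_ofReal (le_of_eq ?_))
    have hsq : a n ^ 2 = 2 * ρ * Real.log (Δ n) :=
      Real.sq_sqrt (mul_pos (mul_pos two_pos hρ') (hlog n)).le
    have hexp : Real.exp (-(2 * (ρ : ℝ))⁻¹ * a n ^ 2) = (Δ n)⁻¹ := by
      rw [hsq]
      have : -(2 * (ρ : ℝ))⁻¹ * (2 * ρ * Real.log (Δ n)) = -Real.log (Δ n) := by
        field_simp
      rw [this, Real.exp_neg, Real.exp_log (hΔ0 n)]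
    have haeq : a n = Real.sqrt (2 * ρ) * Real.sqrt (Real.log (Δ n)) := by
      rw [hadef, ← Real.sqrt_mul (by positivity)]
    have hinv : (2 * (2 * (ρ : ℝ))⁻¹)⁻¹ = ρ := by
      field_simp
    rw [hexp, haeq, hinv, hCdef]
    have h2ρ : Real.sqrt (2 * (ρ : ℝ)) ≠ 0 := ne_of_gt (Real.sqrt_pos.mpr (by positivity))
    have hL : Real.sqrt (Real.log (Δ n)) ≠ 0 := ne_of_gt (Real.sqrt_pos.mpr (hlog n))
    field_simp
  have hsum2 : Summable (fun n => C * (1 / (Δ n * Real.sqrt (Real.log (Δ n))))) :=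
    hsum.mul_left C
  have htsum : ∑' n, μ (s n) ≠ ∞ := by
    refine ne_top_of_le_ne_top ?_ (ENNReal.tsum_le_tsum key)
    rw [← ENNReal.ofReal_tsum_of_nonneg (fun n => mul_nonneg hC (div_nonneg zero_le_one (mul_nonneg (hΔ0 n).le (Real.sqrt_nonneg _)))) hsum2]
    exact ENNReal.ofReal_ne_top
  -- Borel–Cantelli
  have h0 : μ (Filter.limsup s Filter.atTop) = 0 := measure_limsup_atTop_eq_zero htsum
  have hms : ∀ n, MeasurableSet (s n) :=
    fun n => measurableSet_le measurable_const (measurable_pi_apply n).abs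
  have hset : {x : ℕ → ℝ | ∃ N : ℕ, ∀ n ≥ N, |x n| < Real.sqrt (2 * ρ * Real.log (Δ n))}
      = (Filter.limsup s Filter.atTop)ᶜ := by
    rw [Filter.limsup_eq_iInf_iSup_of_nat]
    ext x
    simp only [Set.mem_setOf_eq, Set.mem_compl_iff, Set.iInf_eq_iInter, Set.iSup_eq_iUnion,
      Set.mem_iInter, Set.mem_iUnion, hsdef, Set.mem_setOf_eq, not_forall, not_exists, not_le]
    exact Iff.rfl
  rw [hset, prob_compl_eq_one_sub (MeasurableSet.measurableSet_limsup hms), h0, tsub_zero]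
end

section
/- Let ρ > 0 and let Δ : ℕ → ℝ be a sequence with Δ_n > 1 for all n. If the series ∑_n 1/(Δ_n·√(ln Δ_n)) diverges, then the set Z_ρ({Δ_n}) := { x ∈ ℝ^ℕ : there exists N ∈ ℕ such that |x_n| < √(2ρ·ln Δ_n) for all n ≥ N } has μ_ρ-measure zero. -/
open MeasureTheory ProbabilityTheory Real Filter
open scoped NNReal ENNReal Topology

lemma gaussian_tail_lb (ρ : ℝ≥0) (hρ : ρ ≠ 0) (c δ : ℝ) (hc : 0 ≤ c) (hδ : 0 < δ) :
    ENNReal.ofReal (δ * ((Real.sqrt (2 * Real.pi * ρ))⁻¹ * Real.exp (-(c + δ)^2 / (2 * ρ)))) ≤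
      gaussianReal 0 ρ (Set.Ici c) := by
  have hρ' : (0:ℝ) < (ρ:ℝ) := by exact_mod_cast pos_iff_ne_zero.mpr hρ
  rw [gaussianReal_apply 0 hρ]
  calc ENNReal.ofReal (δ * ((Real.sqrt (2 * Real.pi * ρ))⁻¹ * Real.exp (-(c + δ)^2 / (2 * ρ))))
      = ∫⁻ _x in Set.Ioc c (c + δ),
          ENNReal.ofReal ((Real.sqrt (2 * Real.pi * ρ))⁻¹ * Real.exp (-(c + δ)^2 / (2 * ρ))) := by
        rw [setLIntegral_const, Real.volume_Ioc, add_sub_cancel_left,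
          ← ENNReal.ofReal_mul (by positivity), mul_comm]
    _ ≤ ∫⁻ x in Set.Ioc c (c + δ), gaussianPDF 0 ρ x := by
        refine setLIntegral_mono (measurable_gaussianPDF 0 ρ) (fun x hx => ?_)
        refine ENNReal.ofReal_le_ofReal ?_
        rw [gaussianPDFReal]
        refine mul_le_mul_of_nonneg_left ?_ (by positivity)
        refine Real.exp_le_exp.mpr ?_
        rw [div_le_div_iff_of_pos_right (by positivity)]
        have h1 := hx.1
        have h2 := hx.2
        nlinarith
    _ ≤ ∫⁻ x in Set.Ici c, gaussianPDF 0 ρ x :=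
        lintegral_mono_set (fun x hx => le_of_lt hx.1)

lemma key_bound (ρ : ℝ≥0) (hρ : ρ ≠ 0) (t : ℝ) (ht : 0 < t) :
    ENNReal.ofReal ((Real.exp (-3) / (2 * Real.sqrt (2 * Real.pi))) *
        min 1 (1 / (Real.exp t * Real.sqrt t))) ≤
      gaussianReal 0 ρ (Set.Ici (Real.sqrt (2 * ρ * t))) := by
  have hρ' : (0:ℝ) < (ρ:ℝ) := by exact_mod_cast pos_iff_ne_zero.mpr hρ
  have hπ : (0:ℝ) < Real.pi := Real.pi_pos
  have hsπ : (0:ℝ) < Real.sqrt (2 * Real.pi) := Real.sqrt_pos.mpr (by positivity)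
  have hsρ : (0:ℝ) < Real.sqrt ρ := Real.sqrt_pos.mpr hρ'
  have hsplit : Real.sqrt (2 * Real.pi * ρ) = Real.sqrt (2 * Real.pi) * Real.sqrt ρ :=
    Real.sqrt_mul (by positivity) _
  have hmin1 : min (1:ℝ) (1 / (Real.exp t * Real.sqrt t)) ≤ 1 := min_le_left _ _
  have hmin0 : (0:ℝ) ≤ min (1:ℝ) (1 / (Real.exp t * Real.sqrt t)) := by positivity
  rcases le_or_gt t 1 with hle | hgt
  · -- small t : compare with tail at √(2ρ)
    have hsub : Set.Ici (Real.sqrt (2 * ρ)) ⊆ Set.Ici (Real.sqrt (2 * ρ * t)) := by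
      refine Set.Ici_subset_Ici.mpr (Real.sqrt_le_sqrt ?_)
      nlinarith
    refine le_trans ?_ (measure_mono hsub)
    refine le_trans ?_ (gaussian_tail_lb ρ hρ (Real.sqrt (2 * ρ)) (Real.sqrt ρ)
      (Real.sqrt_nonneg _) hsρ)
    refine ENNReal.ofReal_le_ofReal ?_
    have h2ρ : Real.sqrt (2 * ρ) ^ 2 = 2 * ρ := Real.sq_sqrt (by positivity)
    have hρ2 : Real.sqrt ρ ^ 2 = (ρ:ℝ) := Real.sq_sqrt hρ'.le
    have hexp3 : Real.exp (-3) ≤ Real.exp (-(Real.sqrt (2 * ρ) + Real.sqrt ρ)^2 / (2 * ρ)) := by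
      refine Real.exp_le_exp.mpr ?_
      rw [neg_le, ← neg_div, neg_neg]
      rw [div_le_iff₀ (by positivity)]
      nlinarith [sq_nonneg (Real.sqrt (2 * ρ) - Real.sqrt ρ)]
    calc Real.exp (-3) / (2 * Real.sqrt (2 * Real.pi)) * min 1 (1 / (Real.exp t * Real.sqrt t))
        ≤ Real.exp (-3) / (2 * Real.sqrt (2 * Real.pi)) * 1 := by
          exact mul_le_mul_of_nonneg_left hmin1 (by positivity)
      _ ≤ Real.exp (-(Real.sqrt (2 * ρ) + Real.sqrt ρ)^2 / (2 * ρ)) / Real.sqrt (2 * Real.pi) := by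
          rw [mul_one]
          exact div_le_div₀ (Real.exp_pos _).le hexp3 hsπ (by linarith)
      _ = Real.sqrt ρ * ((Real.sqrt (2 * Real.pi * ρ))⁻¹ *
            Real.exp (-(Real.sqrt (2 * ρ) + Real.sqrt ρ)^2 / (2 * ρ))) := by
          rw [hsplit]; field_simp
  · -- large t : tail at c = √(2ρt), δ = √ρ/(2√t)
    have hst : (1:ℝ) ≤ Real.sqrt t := Real.one_le_sqrt.mpr hgt.le
    have hst0 : (0:ℝ) < Real.sqrt t := lt_of_lt_of_le one_pos hst
    set δ : ℝ := Real.sqrt ρ / (2 * Real.sqrt t) with hδdef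
    have hδ : 0 < δ := by positivity
    refine le_trans ?_ (gaussian_tail_lb ρ hρ (Real.sqrt (2 * ρ * t)) δ (Real.sqrt_nonneg _) hδ)
    refine ENNReal.ofReal_le_ofReal ?_
    set c : ℝ := Real.sqrt (2 * ρ * t) with hcdef
    have hc2 : c ^ 2 = 2 * ρ * t := Real.sq_sqrt (by positivity)
    have hρ2 : Real.sqrt ρ ^ 2 = (ρ:ℝ) := Real.sq_sqrt hρ'.le
    have ht2 : Real.sqrt t ^ 2 = t := Real.sq_sqrt ht.le
    have hceq : c = Real.sqrt 2 * Real.sqrt ρ * Real.sqrt t := by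
      rw [hcdef, Real.sqrt_mul (by positivity), Real.sqrt_mul (by norm_num)]
    have hs2 : Real.sqrt 2 ^ 2 = 2 := Real.sq_sqrt (by norm_num)
    have hs2le : Real.sqrt 2 ≤ 1.5 := by
      nlinarith [Real.sqrt_nonneg 2]
    have key2 : (c + δ)^2 ≤ (t + 2) * (2 * ρ) := by
      rw [hceq, hδdef, add_div' _ _ _ (by positivity : (2 * Real.sqrt t) ≠ 0), div_pow,
        div_le_iff₀ (by positivity)]
      have expand : (Real.sqrt 2 * Real.sqrt ρ * Real.sqrt t * (2 * Real.sqrt t) +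
          Real.sqrt ρ)^2 = 8*ρ*t^2 + 4*Real.sqrt 2*ρ*t + ρ := by
        linear_combination (4*Real.sqrt ρ^2*Real.sqrt t^4)*hs2 +
          (8*Real.sqrt t^4 + 4*Real.sqrt 2*Real.sqrt t^2 + 1)*hρ2 +
          (8*(ρ:ℝ)*(Real.sqrt t^2+t) + 4*Real.sqrt 2*ρ)*ht2
      have hrt2 : (2*Real.sqrt t)^2 = 4*t := by rw [mul_pow, ht2]; norm_num
      rw [expand, hrt2]
      nlinarith [hs2le, hgt, hρ',
        mul_le_mul_of_nonneg_right hs2le (mul_nonneg hρ'.le ht.le),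
        mul_lt_mul_of_pos_left hgt hρ']
    have hexp : Real.exp (-(t + 2)) ≤ Real.exp (-(c + δ)^2 / (2 * ρ)) := by
      refine Real.exp_le_exp.mpr ?_
      rw [neg_le, ← neg_div, neg_neg, div_le_iff₀ (by positivity)]
      exact key2
    have hmin2 : min (1:ℝ) (1 / (Real.exp t * Real.sqrt t)) ≤ 1 / (Real.exp t * Real.sqrt t) :=
      min_le_right _ _
    have hrhs : δ * ((Real.sqrt (2 * Real.pi * ρ))⁻¹ * Real.exp (-(c + δ)^2 / (2 * ρ)))
        = Real.exp (-(c + δ)^2 / (2 * ρ)) / (2 * Real.sqrt t * Real.sqrt (2 * Real.pi)) := by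
      rw [hδdef, hsplit]; field_simp
    rw [hrhs]
    have hexpt : Real.exp (-(t + 2)) = Real.exp (-2) / Real.exp t := by
      rw [eq_div_iff (Real.exp_ne_zero t), ← Real.exp_add]; ring_nf
    calc Real.exp (-3) / (2 * Real.sqrt (2 * Real.pi)) * min 1 (1 / (Real.exp t * Real.sqrt t))
        ≤ Real.exp (-3) / (2 * Real.sqrt (2 * Real.pi)) * (1 / (Real.exp t * Real.sqrt t)) :=
          mul_le_mul_of_nonneg_left hmin2 (by positivity)
      _ ≤ Real.exp (-(t + 2)) / (2 * Real.sqrt t * Real.sqrt (2 * Real.pi)) := by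
          rw [div_mul_div_comm, mul_one, hexpt, div_div]
          exact div_le_div₀ (Real.exp_pos (-2)).le (Real.exp_le_exp.mpr (by norm_num))
            (by positivity) (le_of_eq (by ring))
      _ ≤ Real.exp (-(c + δ)^2 / (2 * ρ)) / (2 * Real.sqrt t * Real.sqrt (2 * Real.pi)) := by
          gcongr

theorem gaussian_product_measure_of_not_summable (ρ : ℝ≥0) (hρ : 0 < ρ)
    (μ : Measure (ℕ → ℝ)) (hμ : IsProductGaussian ρ μ)
    (Δ : ℕ → ℝ) (hΔ : ∀ n, 1 < Δ n)
    (hsum : ¬ Summable fun n => 1 / (Δ n * Real.sqrt (Real.log (Δ n)))) :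
    μ {x : ℕ → ℝ | ∃ N : ℕ, ∀ n ≥ N, |x n| < Real.sqrt (2 * ρ * Real.log (Δ n))} = 0 := by
  have hρ' : ρ ≠ 0 := hρ.ne'
  have ht : ∀ n, 0 < Real.log (Δ n) := fun n => Real.log_pos (hΔ n)
  have hΔ0 : ∀ n, 0 < Δ n := fun n => lt_trans one_pos (hΔ n)
  set m : ℕ → ℝ := fun n => min 1 (1 / (Δ n * Real.sqrt (Real.log (Δ n)))) with hmdef
  have hm0 : ∀ n, 0 < m n := fun n => lt_min one_pos
    (div_pos one_pos (mul_pos (hΔ0 n) (Real.sqrt_pos.mpr (ht n))))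
  set α : ℝ := Real.exp (-3) / (2 * Real.sqrt (2 * Real.pi)) with hαdef
  have hα : 0 < α := by
    have := Real.pi_pos
    positivity
  have hkey : ∀ n, ENNReal.ofReal (α * m n) ≤
      gaussianReal 0 ρ (Set.Ici (Real.sqrt (2 * ρ * Real.log (Δ n)))) := by
    intro n
    have h := key_bound ρ hρ' (Real.log (Δ n)) (ht n)
    rwa [Real.exp_log (hΔ0 n)] at h
  -- m is not summable
  have hm_not : ¬ Summable m := by
    intro hs
    apply hsum
    have h0 : Tendsto m atTop (𝓝 0) := hs.tendsto_atTop_zero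
    have hev : ∀ᶠ n in atTop, m n < 1 := h0.eventually_lt_const one_pos
    obtain ⟨N, hN⟩ := eventually_atTop.mp hev
    have heq : ∀ n, m (n + N) = 1 / (Δ (n + N) * Real.sqrt (Real.log (Δ (n + N)))) := by
      intro n
      have h1 := hN (n + N) (Nat.le_add_left N n)
      rw [hmdef] at h1 ⊢
      simp only at h1 ⊢
      rcases le_total (1 / (Δ (n + N) * Real.sqrt (Real.log (Δ (n + N))))) 1 with h | h
      · exact min_eq_right h
      · rw [min_eq_left h] at h1; exact absurd h1 (lt_irrefl 1)
    have hs' : Summable (fun n => m (n + N)) := (summable_nat_add_iff N).mpr hs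
    exact (summable_nat_add_iff N).mp (hs'.congr heq)
  have hdivP : Tendsto (fun M => ∑ i ∈ Finset.range M, m i) atTop atTop :=
    (not_summable_iff_tendsto_nat_atTop_of_nonneg (fun n => (hm0 n).le)).mp hm_not
  -- rewrite as countable union
  have hset : {x : ℕ → ℝ | ∃ N : ℕ, ∀ n ≥ N, |x n| < Real.sqrt (2 * ρ * Real.log (Δ n))}
      = ⋃ N : ℕ, {x : ℕ → ℝ | ∀ n ≥ N, |x n| < Real.sqrt (2 * ρ * Real.log (Δ n))} := by
    ext x; simp [Set.mem_iUnion]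
  rw [hset]
  refine measure_iUnion_null fun N => ?_
  -- divergence of sums over Icc N M
  have hdiv : Tendsto (fun M => ∑ i ∈ Finset.Icc N M, m i) atTop atTop := by
    have h1 : Tendsto (fun M => ∑ i ∈ Finset.range (M + 1), m i
        + -(∑ i ∈ Finset.range N, m i)) atTop atTop :=
      tendsto_atTop_add_const_right _ _ (hdivP.comp (tendsto_add_atTop_nat 1))
    refine h1.congr' ?_
    filter_upwards [eventually_ge_atTop N] with M hM
    rw [← Finset.Ico_add_one_right_eq_Icc, Finset.sum_Ico_eq_sub _ (by omega)]
    ring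
  -- per-coordinate bound
  have hsingle : ∀ i : ℕ,
      gaussianReal 0 ρ (Set.Ioo (-(Real.sqrt (2 * ρ * Real.log (Δ i))))
        (Real.sqrt (2 * ρ * Real.log (Δ i)))) ≤ ENNReal.ofReal (Real.exp (-(α * m i))) := by
    intro i
    set ci : ℝ := Real.sqrt (2 * ρ * Real.log (Δ i)) with hcidef
    have hd : Disjoint (Set.Ioo (-ci) ci) (Set.Ici ci) := by
      refine Set.disjoint_left.mpr fun x hx hx2 => ?_
      exact absurd hx2 (not_le.mpr hx.2)
    have hsum1 : gaussianReal 0 ρ (Set.Ioo (-ci) ci) + gaussianReal 0 ρ (Set.Ici ci) ≤ 1 := by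
      rw [← measure_union hd measurableSet_Ici]
      exact (measure_mono (Set.subset_univ _)).trans_eq measure_univ
    have h3 : gaussianReal 0 ρ (Set.Ioo (-ci) ci) ≤ 1 - ENNReal.ofReal (α * m i) := by
      refine ENNReal.le_sub_of_add_le_right ENNReal.ofReal_ne_top ?_
      exact le_trans (add_le_add le_rfl (hkey i)) hsum1
    refine h3.trans ?_
    have hnn : 0 ≤ α * m i := mul_nonneg hα.le (hm0 i).le
    rw [← ENNReal.ofReal_one, ← ENNReal.ofReal_sub _ hnn]
    refine ENNReal.ofReal_le_ofReal ?_
    nlinarith [Real.add_one_le_exp (-(α * m i))]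
  -- bound for each M
  have hbound : ∀ M : ℕ,
      μ {x : ℕ → ℝ | ∀ n ≥ N, |x n| < Real.sqrt (2 * ρ * Real.log (Δ n))}
        ≤ ENNReal.ofReal (Real.exp (-(α * ∑ i ∈ Finset.Icc N M, m i))) := by
    intro M
    calc μ {x : ℕ → ℝ | ∀ n ≥ N, |x n| < Real.sqrt (2 * ρ * Real.log (Δ n))}
        ≤ μ {x : ℕ → ℝ | ∀ i ∈ Finset.Icc N M,
            x i ∈ Set.Ioo (-(Real.sqrt (2 * ρ * Real.log (Δ i))))
              (Real.sqrt (2 * ρ * Real.log (Δ i)))} := by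
          refine measure_mono fun x hx i hi => ?_
          rw [Finset.mem_Icc] at hi
          exact abs_lt.mp (hx i hi.1)
      _ = ∏ i ∈ Finset.Icc N M, gaussianReal 0 ρ
            (Set.Ioo (-(Real.sqrt (2 * ρ * Real.log (Δ i))))
              (Real.sqrt (2 * ρ * Real.log (Δ i)))) :=
          hμ _ _ (fun i _ => measurableSet_Ioo)
      _ ≤ ∏ i ∈ Finset.Icc N M, ENNReal.ofReal (Real.exp (-(α * m i))) :=
          Finset.prod_le_prod' fun i _ => hsingle i
      _ = ENNReal.ofReal (∏ i ∈ Finset.Icc N M, Real.exp (-(α * m i))) :=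
          (ENNReal.ofReal_prod_of_nonneg fun i _ => (Real.exp_pos _).le).symm
      _ = ENNReal.ofReal (Real.exp (-(α * ∑ i ∈ Finset.Icc N M, m i))) := by
          rw [← Real.exp_sum]
          congr 1
          rw [Finset.mul_sum, ← Finset.sum_neg_distrib]
  -- conclude
  have htend : Tendsto (fun M => ENNReal.ofReal
      (Real.exp (-(α * ∑ i ∈ Finset.Icc N M, m i)))) atTop (𝓝 0) := by
    have h1 : Tendsto (fun M => α * ∑ i ∈ Finset.Icc N M, m i) atTop atTop :=
      hdiv.const_mul_atTop hα
    have h2 : Tendsto (fun M => Real.exp (-(α * ∑ i ∈ Finset.Icc N M, m i)))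
        atTop (𝓝 0) := Real.tendsto_exp_atBot.comp (tendsto_neg_atTop_atBot.comp h1)
    have h3 := ENNReal.tendsto_ofReal h2
    simpa using h3
  exact le_antisymm (ge_of_tendsto' htend hbound) zero_le
end

section
/- If ρ > 0, ρ' > 0 and ρ ≠ ρ', then the measures μ_ρ and μ_{ρ'} on ℝ^ℕ are mutually singular (i.e., they have disjoint supports: there is a measurable set carrying all of μ_ρ whose complement carries all of μ_{ρ'}). -/
open MeasureTheory ProbabilityTheory
open scoped NNReal ENNReal

section Aux

open Real Filter Set
open scoped Topology

lemma sq_exp_Ioi {b : ℝ} (hb : 0 < b) :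
    ∫ x in Ioi (0:ℝ), x ^ 2 * rexp (-b * x ^ 2)
      = b ^ (-(3:ℝ)/2) * √π / 4 := by
  have h := integral_rpow_mul_exp_neg_mul_rpow (p := 2) (q := 2) two_pos (by norm_num) hb
  have h2 : ∀ x : ℝ, x ^ (2:ℝ) = x ^ 2 := fun x => by
    rw [show (2:ℝ) = ((2:ℕ):ℝ) by norm_num, Real.rpow_natCast]
  simp only [h2] at h
  rw [h, show ((2:ℝ)+1)/2 = 1/2 + 1 by norm_num,
    Real.Gamma_add_one (by norm_num), Real.Gamma_one_half_eq]
  ring_nf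

lemma sq_exp_integral {b : ℝ} (hb : 0 < b) :
    ∫ x : ℝ, x ^ 2 * rexp (-b * x ^ 2) = b ^ (-(3:ℝ)/2) * √π / 2 := by
  have := integral_comp_abs (f := fun y : ℝ => y ^ 2 * rexp (-b * y ^ 2))
  simp only [sq_abs] at this
  rw [this, sq_exp_Ioi hb]
  ring

lemma integrable_sq_exp {b : ℝ} (hb : 0 < b) :
    Integrable (fun x : ℝ => x ^ 2 * rexp (-b * x ^ 2)) := by
  have h := integrable_rpow_mul_exp_neg_mul_sq hb (s := 2) (by norm_num)
  have h2 : ∀ x : ℝ, x ^ (2:ℝ) = x ^ 2 := fun x => by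
    rw [show (2:ℝ) = ((2:ℕ):ℝ) by norm_num, Real.rpow_natCast]
  simpa only [h2] using h


lemma pdf_eq (v : ℝ≥0) (hv : v ≠ 0) (x : ℝ) :
    gaussianPDFReal 0 v x = (√(2 * π * v))⁻¹ * rexp (-(2*(v:ℝ))⁻¹ * x ^ 2) := by
  have hv' : (0:ℝ) < v := lt_of_le_of_ne v.coe_nonneg (by exact_mod_cast (Ne.symm hv))
  rw [gaussianPDFReal]
  congr 1
  rw [sub_zero]
  congr 1
  field_simp

lemma integrable_sq_gaussian (v : ℝ≥0) (hv : v ≠ 0) :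
    Integrable (fun x : ℝ => x ^ 2) (gaussianReal 0 v) := by
  have hv' : (0:ℝ) < v := lt_of_le_of_ne v.coe_nonneg (by exact_mod_cast (Ne.symm hv))
  rw [gaussianReal_of_var_ne_zero 0 hv]
  rw [integrable_withDensity_iff (measurable_gaussianPDF 0 v)
    (ae_of_all _ fun x => ENNReal.ofReal_lt_top)]
  have : ∀ x : ℝ, x ^ 2 * (gaussianPDF 0 v x).toReal
      = (√(2 * π * v))⁻¹ * (x ^ 2 * rexp (-(2*(v:ℝ))⁻¹ * x ^ 2)) := by
    intro x
    rw [gaussianPDF, ENNReal.toReal_ofReal (gaussianPDFReal_nonneg 0 v x), pdf_eq v hv]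
    ring
  simp only [this]
  exact (integrable_sq_exp (by positivity)).const_mul _

lemma integral_sq_gaussian (v : ℝ≥0) (hv : v ≠ 0) :
    ∫ x, x ^ 2 ∂(gaussianReal 0 v) = v := by
  have hv' : (0:ℝ) < v := lt_of_le_of_ne v.coe_nonneg (by exact_mod_cast (Ne.symm hv))
  rw [gaussianReal_of_var_ne_zero 0 hv]
  have hpdf : gaussianPDF 0 v = fun x => ((gaussianPDFReal 0 v x).toNNReal : ℝ≥0∞) := by
    ext x; rw [gaussianPDF, ENNReal.ofReal]
  rw [hpdf, integral_withDensity_eq_integral_smul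
    (measurable_gaussianPDFReal 0 v).real_toNNReal _]
  have : ∀ x : ℝ, (gaussianPDFReal 0 v x).toNNReal • x ^ 2
      = (√(2 * π * v))⁻¹ * (x ^ 2 * rexp (-(2*(v:ℝ))⁻¹ * x ^ 2)) := by
    intro x
    rw [NNReal.smul_def, smul_eq_mul, Real.coe_toNNReal _ (gaussianPDFReal_nonneg 0 v x),
      pdf_eq v hv]
    ring
  simp only [this]
  rw [integral_const_mul, sq_exp_integral (by positivity)]
  have hpos : (0:ℝ) < 2*(v:ℝ) := by positivity
  have h1 : ((2*(v:ℝ))⁻¹) ^ (-(3:ℝ)/2) = (2*(v:ℝ)) * √(2*(v:ℝ)) := by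
    rw [Real.inv_rpow hpos.le, ← Real.rpow_neg hpos.le, neg_div, neg_neg,
      show (3:ℝ)/2 = 1 + 1/2 by norm_num, Real.rpow_add hpos, Real.rpow_one,
      ← Real.sqrt_eq_rpow]
  have h2 : √(2*π*(v:ℝ)) = √(2*(v:ℝ)) * √π := by
    rw [show 2*π*(v:ℝ) = (2*(v:ℝ))*π by ring, Real.sqrt_mul hpos.le]
  rw [h1, h2]
  have h3 : √(2*(v:ℝ)) ≠ 0 := by positivity
  have h4 : √π ≠ 0 := by positivity
  field_simp



lemma ae_tendsto_of_isProductGaussian (ρ : ℝ≥0) (hρ : 0 < ρ) (μ : Measure (ℕ → ℝ))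
    (hμ : IsProductGaussian ρ μ) :
    ∀ᵐ x ∂μ, Tendsto (fun n : ℕ => (∑ i ∈ Finset.range n, (x i)^2) / (n:ℝ)) atTop (𝓝 (ρ:ℝ)) := by
  classical
  have hmap : ∀ i : ℕ, Measure.map (fun x : ℕ → ℝ => x i) μ = gaussianReal 0 ρ := by
    intro i
    ext s hs
    rw [Measure.map_apply (measurable_pi_apply i) hs]
    have h := hμ {i} (fun _ => s) (fun _ _ => hs)
    have hset : (fun x : ℕ → ℝ => x i) ⁻¹' s
        = {x : ℕ → ℝ | ∀ j ∈ ({i} : Finset ℕ), x j ∈ s} := by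
      ext x; simp
    rw [hset, h, Finset.prod_singleton]
  have hindep : ∀ i j : ℕ, i ≠ j →
      IndepFun (fun x : ℕ → ℝ => x i) (fun x : ℕ → ℝ => x j) μ := by
    intro i j hij
    rw [indepFun_iff_measure_inter_preimage_eq_mul]
    intro s t hs ht
    set A : ℕ → Set ℝ := fun k => if k = i then s else t with hA
    have hmeas : ∀ k ∈ ({i, j} : Finset ℕ), MeasurableSet (A k) := by
      intro k _
      by_cases h : k = i <;> simp [hA, h, hs, ht]
    have h := hμ {i, j} A hmeas
    have hset : {x : ℕ → ℝ | ∀ k ∈ ({i, j} : Finset ℕ), x k ∈ A k}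
        = (fun x : ℕ → ℝ => x i) ⁻¹' s ∩ (fun x : ℕ → ℝ => x j) ⁻¹' t := by
      ext x
      simp only [Finset.mem_insert, Finset.mem_singleton, Set.mem_setOf_eq, Set.mem_inter_iff,
        Set.mem_preimage]
      constructor
      · intro hx
        refine ⟨by simpa [hA] using hx i (Or.inl rfl), ?_⟩
        have := hx j (Or.inr rfl)
        simpa [hA, hij.symm] using this
      · rintro ⟨h1, h2⟩ k hk
        rcases hk with rfl | rfl
        · simpa [hA] using h1
        · simpa [hA, hij.symm] using h2
    rw [hset, Finset.prod_pair hij] at h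
    have hAi : A i = s := by simp [hA]
    have hAj : A j = t := by simp [hA, hij.symm]
    rw [hAi, hAj] at h
    rw [h]
    congr 1
    · rw [← Measure.map_apply (measurable_pi_apply i) hs, hmap i]
    · rw [← Measure.map_apply (measurable_pi_apply j) ht, hmap j]
  set X : ℕ → (ℕ → ℝ) → ℝ := fun i x => (x i) ^ 2 with hX
  have hXind : Pairwise (Function.onFun (IndepFun · · μ) X) := by
    intro i j hij
    exact (hindep i j hij).comp (measurable_id.pow_const 2) (measurable_id.pow_const 2)
  have hXid : ∀ i, IdentDistrib (X i) (X 0) μ μ := by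
    intro i
    have h0 : IdentDistrib (fun x : ℕ → ℝ => x i) (fun x : ℕ → ℝ => x 0) μ μ :=
      ⟨(measurable_pi_apply i).aemeasurable, (measurable_pi_apply 0).aemeasurable,
        by rw [hmap i, hmap 0]⟩
    exact h0.comp (measurable_id.pow_const 2)
  have hint : Integrable (X 0) μ := by
    have hg := integrable_sq_gaussian ρ hρ.ne'
    rw [← hmap 0] at hg
    exact (integrable_map_measure (measurable_id.pow_const 2).aestronglyMeasurable
      (measurable_pi_apply 0).aemeasurable).mp hg
  have hexp : (∫ x, X 0 x ∂μ) = (ρ : ℝ) := by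
    have h0 := integral_map (μ := μ) (φ := fun x : ℕ → ℝ => x 0) (f := fun y : ℝ => y ^ 2)
      (measurable_pi_apply 0).aemeasurable
      (measurable_id.pow_const 2).aestronglyMeasurable
    rw [hmap 0, integral_sq_gaussian ρ hρ.ne'] at h0
    exact h0.symm
  have h := strong_law_ae_real X hint hXind hXid
  rw [hexp] at h
  exact h


end Aux

section Main

open Real Filter Set
open scoped Topology

/-- Product Gaussian measures with different variances are mutually singular. -/
theorem gaussian_product_measures_mutuallySingular (ρ ρ' : ℝ≥0) (hρ : 0 < ρ) (hρ' : 0 < ρ')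
    (hne : ρ ≠ ρ') (μ μ' : Measure (ℕ → ℝ))
    (hμ : IsProductGaussian ρ μ) (hμ' : IsProductGaussian ρ' μ') :
    μ ⟂ₘ μ' := by
  have h1 := ae_tendsto_of_isProductGaussian ρ hρ μ hμ
  have h2 := ae_tendsto_of_isProductGaussian ρ' hρ' μ' hμ'
  refine ⟨{x : ℕ → ℝ |
    Tendsto (fun n : ℕ => (∑ i ∈ Finset.range n, (x i)^2) / (n:ℝ)) atTop (𝓝 (ρ':ℝ))}, ?_, ?_, ?_⟩
  · exact measurableSet_tendsto (𝓝 (ρ':ℝ)) fun n =>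
      (Finset.measurable_sum _ fun i _ => (measurable_pi_apply i).pow_const 2).div_const _
  · refine measure_mono_null ?_ (ae_iff.mp h1)
    intro x hx
    simp only [Set.mem_setOf_eq] at hx ⊢
    intro hx'
    exact hne (NNReal.coe_injective (tendsto_nhds_unique hx' hx))
  · have : {x : ℕ → ℝ |
        Tendsto (fun n : ℕ => (∑ i ∈ Finset.range n, (x i)^2) / (n:ℝ)) atTop (𝓝 (ρ':ℝ))}ᶜ
        = {x : ℕ → ℝ | ¬ Tendsto (fun n : ℕ => (∑ i ∈ Finset.range n, (x i)^2) / n)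
            atTop (𝓝 (ρ':ℝ))} := rfl
    rw [this]
    exact ae_iff.mp h2

end Main
end

section
/- Let 0 < ρ' < ρ and let S := { x ∈ ℝ^ℕ : there exists N ≥ 2 such that |x_n| < √(2ρ·ln n) for all n ≥ N }. Then μ_ρ(S) = 0 while μ_{ρ'}(S) = 1. -/
open MeasureTheory ProbabilityTheory Filter
open scoped NNReal ENNReal
open Filter Set Real


lemma aux_not_summable_shift :
    ¬ Summable (fun n : ℕ => 1 / (((n : ℝ) + 2) * Real.log ((n : ℝ) + 2))) := by
  intro hs
  set f : ℕ → ℝ := fun n => 1 / (((n : ℝ) + 2) * Real.log ((n : ℝ) + 2)) with hf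
  have hlog2 : (0:ℝ) < Real.log 2 := Real.log_pos (by norm_num)
  have hpos : ∀ n : ℕ, 0 < ((n : ℝ) + 2) * Real.log ((n : ℝ) + 2) := by
    intro n
    have h0 : (0:ℝ) ≤ (n : ℝ) := Nat.cast_nonneg n
    have : (0:ℝ) < Real.log ((n:ℝ) + 2) := Real.log_pos (by linarith)
    positivity
  have h_nonneg : ∀ n, 0 ≤ f n := fun n => le_of_lt (by simpa [hf] using one_div_pos.2 (hpos n))
  have h_anti : ∀ ⦃m n : ℕ⦄, 0 < m → m ≤ n → f n ≤ f m := by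
    intro m n _ hmn
    apply one_div_le_one_div_of_le (hpos m)
    have h0 : (m:ℝ) ≤ (n:ℝ) := Nat.cast_le.2 hmn
    have h1 : ((m:ℝ) + 2) ≤ (n:ℝ) + 2 := by linarith
    have h2 : Real.log ((m:ℝ)+2) ≤ Real.log ((n:ℝ)+2) := Real.log_le_log (by positivity) h1
    have h3 : (0:ℝ) < Real.log ((m:ℝ)+2) := by
      refine Real.log_pos ?_
      have := Nat.cast_nonneg (α := ℝ) m; linarith
    nlinarith
  have hcond : Summable (fun k : ℕ => 2 ^ k * f (2 ^ k)) :=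
    (summable_condensed_iff_of_nonneg h_nonneg h_anti).2 hs
  have hcomp : ∀ k : ℕ, 1 / (3 * Real.log 2) * (1 / ((k:ℝ) + 2)) ≤ 2 ^ k * f (2 ^ k) := by
    intro k
    have h2k : (1:ℝ) ≤ (2:ℝ) ^ k := one_le_pow₀ (by norm_num)
    have hle1 : ((2:ℝ) ^ k + 2) ≤ 3 * 2 ^ k := by nlinarith
    have hlogpos : (0:ℝ) < Real.log ((2:ℝ)^k + 2) := Real.log_pos (by nlinarith)
    have hle2 : Real.log ((2:ℝ) ^ k + 2) ≤ ((k:ℝ) + 2) * Real.log 2 := by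
      have h22 : ((2:ℝ) ^ k + 2) ≤ 2 ^ (k + 2) := by rw [pow_add]; nlinarith
      calc Real.log ((2:ℝ) ^ k + 2) ≤ Real.log (2 ^ (k+2)) := Real.log_le_log (by positivity) h22
        _ = ((k:ℝ) + 2) * Real.log 2 := by rw [Real.log_pow]; push_cast; ring
    have hcast : ((2^k : ℕ) : ℝ) = (2:ℝ)^k := by push_cast; ring
    have hfval : f (2^k) = 1 / (((2:ℝ)^k + 2) * Real.log ((2:ℝ)^k + 2)) := by
      simp only [hf, hcast]
    have hD : (0:ℝ) < ((2:ℝ)^k + 2) * Real.log ((2:ℝ)^k + 2) := by positivity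
    have key : ((2:ℝ)^k + 2) * Real.log ((2:ℝ)^k+2) ≤ 2^k * (((k:ℝ)+2) * (3*Real.log 2)) := by
      nlinarith [mul_le_mul hle1 hle2 hlogpos.le (by positivity : (0:ℝ) ≤ 3 * 2^k)]
    rw [hfval]
    have hk2 : (0:ℝ) < (k:ℝ) + 2 := by positivity
    have e1 : 1/(3*Real.log 2) * (1/((k:ℝ)+2)) = 2^k / (2^k * (((k:ℝ)+2)*(3*Real.log 2))) := by
      field_simp
    have e2 : (2:ℝ)^k * (1 / (((2:ℝ)^k + 2) * Real.log ((2:ℝ)^k + 2)))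
        = 2^k / (((2:ℝ)^k + 2) * Real.log ((2:ℝ)^k + 2)) := by ring
    rw [e1, e2]
    gcongr
  have hsum2 : Summable (fun k : ℕ => 1 / (3 * Real.log 2) * (1 / ((k:ℝ) + 2))) :=
    Summable.of_nonneg_of_le (fun k => by positivity) hcomp hcond
  have hsum3 : Summable (fun k : ℕ => 1 / ((k:ℝ) + 2)) := by
    have := hsum2.mul_left (3 * Real.log 2)
    refine this.congr fun k => ?_
    field_simp
  have hsum4 : Summable (fun k : ℕ => 1 / ((k:ℝ))) := by
    refine (summable_nat_add_iff 2).1 ?_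
    refine hsum3.congr fun k => ?_
    push_cast; ring
  exact Real.not_summable_one_div_natCast hsum4

lemma aux_not_summable :
    ¬ Summable (fun n : ℕ => 1 / ((n : ℝ) * Real.log n)) := by
  intro hs
  refine aux_not_summable_shift ?_
  have := (summable_nat_add_iff 2).2 hs
  refine this.congr fun k => ?_
  push_cast; ring_nf



-- lower bound on an interval
lemma gaussian_Icc_lower (v : ℝ≥0) (hv : v ≠ 0) {c d : ℝ} (hc : 0 ≤ c) (hcd : c ≤ d) :
    ENNReal.ofReal ((d - c) * ((Real.sqrt (2 * π * v))⁻¹ * Real.exp (-d^2 / (2*v))))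
      ≤ gaussianReal 0 v (Set.Icc c d) := by
  rw [gaussianReal_apply_eq_integral 0 hv]
  refine ENNReal.ofReal_le_ofReal ?_
  have hint : IntegrableOn (gaussianPDFReal 0 v) (Set.Icc c d) :=
    (integrable_gaussianPDFReal 0 v).integrableOn
  have hconst : IntegrableOn (fun _ : ℝ =>
      (Real.sqrt (2 * π * v))⁻¹ * Real.exp (-d^2 / (2*v))) (Set.Icc c d) := by
    exact integrableOn_const (by simp [Real.volume_Icc])
  calc (d - c) * ((Real.sqrt (2 * π * v))⁻¹ * Real.exp (-d^2 / (2*v)))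
      = ∫ _ in Set.Icc c d, (Real.sqrt (2 * π * v))⁻¹ * Real.exp (-d^2 / (2*v)) := by
        rw [setIntegral_const, measureReal_def, Real.volume_Icc, ENNReal.toReal_ofReal (by linarith), smul_eq_mul]
    _ ≤ ∫ x in Set.Icc c d, gaussianPDFReal 0 v x := by
        refine setIntegral_mono_on hconst hint measurableSet_Icc fun x hx => ?_
        unfold gaussianPDFReal
        have hx2 : x^2 ≤ d^2 := by nlinarith [hx.1, hx.2]
        have : -d^2/(2*(v:ℝ)) ≤ -(x-0)^2/(2*v) := by
          have hv0 : (0:ℝ) < v := lt_of_le_of_ne v.coe_nonneg (by exact_mod_cast hv.symm)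
          rw [div_le_div_iff₀ (by positivity) (by positivity)]
          nlinarith
        exact mul_le_mul_of_nonneg_left (Real.exp_le_exp.2 this) (by positivity)

-- upper bound on Ici c
lemma gaussian_Ici_upper (v : ℝ≥0) (hv : v ≠ 0) {c : ℝ} (hc : 0 < c) :
    gaussianReal 0 v (Set.Ici c)
      ≤ ENNReal.ofReal ((Real.sqrt (2 * π * v))⁻¹ * ((2*v/c) * Real.exp (-c^2 / (2*v)))) := by
  have hv0 : (0:ℝ) < v := lt_of_le_of_ne v.coe_nonneg (by exact_mod_cast hv.symm)
  have hb : (0:ℝ) < c / (2*v) := by positivity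
  rw [gaussianReal_apply_eq_integral 0 hv]
  refine ENNReal.ofReal_le_ofReal ?_
  have hint : IntegrableOn (gaussianPDFReal 0 v) (Set.Ici c) :=
    (integrable_gaussianPDFReal 0 v).integrableOn
  have hexp_int : IntegrableOn (fun x => Real.exp (-(c/(2*v)) * x)) (Set.Ici c) := by
    rw [integrableOn_Ici_iff_integrableOn_Ioi]
    exact exp_neg_integrableOn_Ioi c hb
  have step1 : ∫ x in Set.Ici c, gaussianPDFReal 0 v x
      ≤ ∫ x in Set.Ici c, (Real.sqrt (2 * π * v))⁻¹ * Real.exp (-(c/(2*v)) * x) := by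
    refine setIntegral_mono_on hint (hexp_int.const_mul _) measurableSet_Ici fun x hx => ?_
    unfold gaussianPDFReal
    have hx' : c ≤ x := hx
    have hkey : -(x-0)^2/(2*(v:ℝ)) ≤ -(c/(2*v)) * x := by
      have h9 : -(c/(2*(v:ℝ)))*x = -(c*x)/(2*v) := by ring
      rw [h9]
      gcongr
      nlinarith
    exact mul_le_mul_of_nonneg_left (Real.exp_le_exp.2 hkey) (by positivity)
  have step2 : ∫ x in Set.Ici c, Real.exp (-(c/(2*v)) * x) = (2*v/c) * Real.exp (-c^2/(2*v)) := by
    rw [MeasureTheory.setIntegral_congr_set Ioi_ae_eq_Ici.symm]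
    have hderiv : ∀ x ∈ Set.Ioi c, HasDerivAt (fun x => -(2*v/c) * Real.exp (-(c/(2*v)) * x))
        (Real.exp (-(c/(2*v)) * x)) x := by
      intro x _
      have h1 : HasDerivAt (fun x : ℝ => -(c/(2*v)) * x) (-(c/(2*v))) x := by
        simpa using (hasDerivAt_id x).const_mul (-(c/(2*(v:ℝ))))
      have h2 := (h1.exp).const_mul (-(2*(v:ℝ)/c))
      convert h2 using 1
      case e'_9 =>
        have hc' : c ≠ 0 := hc.ne'
        have hv' : (v:ℝ) ≠ 0 := hv0.ne'
        have hk : (2*(v:ℝ)/c) * (c/(2*v)) = 1 := by field_simp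
        linear_combination (-(Real.exp (-(c/(2*v)) * x))) * hk
      all_goals rfl
    have htend : Tendsto (fun x => -(2*(v:ℝ)/c) * Real.exp (-(c/(2*v)) * x)) atTop (nhds 0) := by
      rw [show (0:ℝ) = -(2*(v:ℝ)/c) * 0 by ring]
      refine Tendsto.const_mul _ ?_
      refine Real.tendsto_exp_atBot.comp ?_
      exact Filter.Tendsto.const_mul_atTop_of_neg (neg_neg_iff_pos.2 (by positivity) : -(c/(2*(v:ℝ))) < 0) tendsto_id
    have hcont : ContinuousOn (fun x => -(2*(v:ℝ)/c) * Real.exp (-(c/(2*v)) * x)) (Set.Ici c) :=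
      (Continuous.mul continuous_const (Real.continuous_exp.comp (continuous_const.mul continuous_id))).continuousOn
    rw [integral_Ioi_of_hasDerivAt_of_tendsto (hcont c Set.self_mem_Ici) hderiv
      (hexp_int.mono_set Set.Ioi_subset_Ici_self) htend]
    have : -(c/(2*(v:ℝ))) * c = -c^2/(2*v) := by ring
    rw [this]
    ring
  calc ∫ x in Set.Ici c, gaussianPDFReal 0 v x
      ≤ ∫ x in Set.Ici c, (Real.sqrt (2 * π * v))⁻¹ * Real.exp (-(c/(2*v)) * x) := step1
    _ = (Real.sqrt (2 * π * v))⁻¹ * ((2*v/c) * Real.exp (-c^2 / (2*v))) := by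
        rw [integral_const_mul, step2]


lemma gaussian_neg_symm (v : ℝ≥0) {c : ℝ} :
    gaussianReal 0 v (Set.Iic (-c)) = gaussianReal 0 v (Set.Ici c) := by
  have hmap : (gaussianReal 0 v).map (fun x : ℝ => -1 * x) = gaussianReal 0 v := by
    rw [gaussianReal_map_const_mul]
    congr 1
    · ring
    · ext
      push_cast
      norm_num
  conv_lhs => rw [← hmap]
  rw [Measure.map_apply (by fun_prop) measurableSet_Iic]
  congr 1
  ext x
  simp

lemma gaussian_abs_tail (v : ℝ≥0) (hv : v ≠ 0) {c : ℝ} (hc : 0 < c) :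
    gaussianReal 0 v {y : ℝ | c ≤ |y|}
      ≤ ENNReal.ofReal (2 * ((Real.sqrt (2 * π * v))⁻¹ * ((2*v/c) * Real.exp (-c^2 / (2*v))))) := by
  have hsub : {y : ℝ | c ≤ |y|} ⊆ Set.Iic (-c) ∪ Set.Ici c := by
    intro y hy
    rcases le_abs.1 (show c ≤ |y| from hy) with h | h
    · exact Or.inr h
    · exact Or.inl (by simpa using le_neg.1 h)
  calc gaussianReal 0 v {y : ℝ | c ≤ |y|}
      ≤ gaussianReal 0 v (Set.Iic (-c) ∪ Set.Ici c) := measure_mono hsub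
    _ ≤ gaussianReal 0 v (Set.Iic (-c)) + gaussianReal 0 v (Set.Ici c) := measure_union_le _ _
    _ = gaussianReal 0 v (Set.Ici c) + gaussianReal 0 v (Set.Ici c) := by
        rw [gaussian_neg_symm]
    _ ≤ ENNReal.ofReal ((Real.sqrt (2 * π * v))⁻¹ * ((2*v/c) * Real.exp (-c^2 / (2*v))))
        + ENNReal.ofReal ((Real.sqrt (2 * π * v))⁻¹ * ((2*v/c) * Real.exp (-c^2 / (2*v)))) := by
        gcongr <;> exact gaussian_Ici_upper v hv hc
    _ = ENNReal.ofReal (2 * ((Real.sqrt (2 * π * v))⁻¹ * ((2*v/c) * Real.exp (-c^2 / (2*v))))) := by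
        rw [← ENNReal.ofReal_add (by positivity) (by positivity)]
        congr 1
        ring


set_option maxHeartbeats 2000000 in
/-- The set of sequences eventually bounded by `√(2ρ ln n)` has `μ_ρ`-measure zero
but `μ_{ρ'}`-measure one for `ρ' < ρ`. -/
theorem gaussian_product_measure_log_bound_set (ρ ρ' : ℝ≥0) (hρ' : 0 < ρ') (hρ : ρ' < ρ)
    (μ μ' : Measure (ℕ → ℝ))
    (hμ : IsProductGaussian ρ μ) (hμ' : IsProductGaussian ρ' μ') :
    μ {x : ℕ → ℝ | ∃ N : ℕ, 2 ≤ N ∧ ∀ n ≥ N, |x n| < Real.sqrt (2 * ρ * Real.log n)} = 0 ∧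
    μ' {x : ℕ → ℝ | ∃ N : ℕ, 2 ≤ N ∧ ∀ n ≥ N, |x n| < Real.sqrt (2 * ρ * Real.log n)} = 1 := by
  have hρpos : 0 < ρ := hρ'.trans hρ
  constructor
  · -- Part 1
    have key : ∀ N : ℕ, μ {x : ℕ → ℝ | ∀ n ≥ N, |x n| < Real.sqrt (2 * ρ * Real.log n)} = 0 := by
      intro N

      have hρR : (0:ℝ) < ρ := hρpos
      have hρne : ρ ≠ 0 := hρpos.ne'
      set c : ℕ → ℝ := fun n => Real.sqrt (2 * ρ * Real.log n) with hcdef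
      set q : ℕ → ℝ≥0∞ := fun i => gaussianReal 0 ρ (Set.Ioo (-(c i)) (c i)) with hqdef
      set p : ℕ → ℝ := fun i => (q i).toReal with hpdef
      set r : ℕ → ℝ := fun i => 1 - p i with hrdef
      have hq_ne_top : ∀ i, q i ≠ ⊤ := fun i => measure_ne_top _ _
      have hp_nonneg : ∀ i, 0 ≤ p i := fun i => ENNReal.toReal_nonneg
      have hp_le_one : ∀ i, p i ≤ 1 := by
        intro i
        have : q i ≤ 1 := prob_le_one
        simpa [hpdef] using ENNReal.toReal_mono (by norm_num) this
      have hr_nonneg : ∀ i, 0 ≤ r i := fun i => by simp [hrdef, hp_le_one i]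
      set K2 : ℝ := (Real.sqrt (2 * π * ρ))⁻¹ * Real.exp (-3/(2*ρ)) with hK2def
      have hK2pos : 0 < K2 := by
        have : (0:ℝ) < 2 * π * ρ := by positivity
        positivity
      -- eventual lower bound on r
      have hlogT : Tendsto (fun n : ℕ => Real.log n) atTop atTop :=
        Real.tendsto_log_atTop.comp tendsto_natCast_atTop_atTop
      have hr_lower : ∀ᶠ n : ℕ in atTop, K2 / ((n:ℝ) * Real.log n) ≤ r n := by
        filter_upwards [hlogT.eventually_ge_atTop (2*(ρ:ℝ)),
          hlogT.eventually_ge_atTop (1/(2*(ρ:ℝ))), eventually_ge_atTop 1] with n h2ρ hinv hn1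
        have hn0 : (0:ℝ) < n := by exact_mod_cast hn1
        have hlogpos : 0 < Real.log n := lt_of_lt_of_le (by positivity) h2ρ
        have h1 : 1 ≤ 2 * (ρ:ℝ) * Real.log n := by
          rw [div_le_iff₀ (by positivity)] at hinv
          linarith
        have hc0 : 0 ≤ c n := Real.sqrt_nonneg _
        have hc2 : (c n)^2 = 2 * ρ * Real.log n := Real.sq_sqrt (by positivity)
        have hc1 : 1 ≤ c n := by nlinarith [sq_nonneg (c n - 1), sq_nonneg (c n + 1)]
        have hclog : c n ≤ Real.log n := by
          have h9 : 2 * ρ * Real.log n ≤ Real.log n * Real.log n := by nlinarith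
          calc c n ≤ Real.sqrt (Real.log n * Real.log n) := Real.sqrt_le_sqrt h9
            _ = Real.log n := Real.sqrt_mul_self hlogpos.le
        set d : ℝ := c n + 1/(c n) with hddef
        clear_value d
        have hcd : c n ≤ d := by
          have : 0 < 1/(c n) := by positivity
          rw [hddef]; linarith
        have hd2 : d^2 ≤ (c n)^2 + 3 := by
          have h1c : 1/(c n) ≤ 1 := by rw [div_le_one (by positivity)]; exact hc1
          have h1c0 : 0 < 1/(c n) := by positivity
          have h1csq : (1/(c n))^2 ≤ 1 := pow_le_one₀ h1c0.le h1c
          have : d^2 = (c n)^2 + 2 + (1/(c n))^2 := by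
            rw [hddef]; field_simp; ring
          nlinarith
        set G : ℝ≥0∞ := gaussianReal 0 ρ (Set.Icc (c n) d) with hGdef
        set X : ℝ := (d - c n) * ((Real.sqrt (2 * π * ρ))⁻¹ * Real.exp (-d^2 / (2*ρ))) with hXdef
        have hX0 : 0 ≤ X := by
          have : 0 ≤ d - c n := by linarith
          positivity
        have hXG : X ≤ G.toReal := by
          have h10 := gaussian_Icc_lower ρ hρne hc0 hcd
          calc X = (ENNReal.ofReal X).toReal := (ENNReal.toReal_ofReal hX0).symm
            _ ≤ G.toReal := ENNReal.toReal_mono (measure_ne_top _ _) h10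
        have hGr : G.toReal ≤ r n := by
          have hdisj : Disjoint (Set.Ioo (-(c n)) (c n)) (Set.Icc (c n) d) := by
            rw [Set.disjoint_left]
            intro a ha hb
            exact absurd hb.1 (not_le.2 ha.2)
          have hun : q n + G ≤ 1 := by
            rw [← measure_union hdisj measurableSet_Icc]
            exact prob_le_one
          have := ENNReal.toReal_mono (by norm_num) hun
          rw [ENNReal.toReal_add (hq_ne_top n) (measure_ne_top _ _)] at this
          simp only [ENNReal.toReal_one] at this
          simp only [hrdef]
          linarith [this]
        -- now chain
        have hdc : d - c n = 1/(c n) := by rw [hddef]; ring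
        have hexp2 : Real.exp (-3/(2*(ρ:ℝ))) * ((n:ℝ))⁻¹ ≤ Real.exp (-d^2/(2*ρ)) := by
          have e1 : Real.exp (-((c n)^2+3)/(2*(ρ:ℝ))) ≤ Real.exp (-d^2/(2*ρ)) := by
            apply Real.exp_le_exp.2
            gcongr
          have e2 : Real.exp (-((c n)^2+3)/(2*(ρ:ℝ)))
              = Real.exp (-3/(2*(ρ:ℝ))) * ((n:ℝ))⁻¹ := by
            rw [← Real.exp_log hn0, ← Real.exp_neg, ← Real.exp_add]
            congr 1
            rw [hc2]
            field_simp
            ring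
          linarith [e1, e2.symm.le]
        have hfinal : K2 / ((n:ℝ) * Real.log n) ≤ X := by
          have hcn0 : 0 < c n := lt_of_lt_of_le one_pos hc1
          calc K2 / ((n:ℝ) * Real.log n)
              ≤ K2 / ((n:ℝ) * c n) := by
                have hcn0' : (0:ℝ) < (n:ℝ) * c n := mul_pos hn0 (lt_of_lt_of_le one_pos hc1)
                exact div_le_div_of_nonneg_left hK2pos.le hcn0' (by gcongr)
            _ = (1/(c n)) * ((Real.sqrt (2 * π * ρ))⁻¹ * (Real.exp (-3/(2*(ρ:ℝ))) * ((n:ℝ))⁻¹)) := by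
                rw [hK2def]; field_simp
            _ ≤ (1/(c n)) * ((Real.sqrt (2 * π * ρ))⁻¹ * Real.exp (-d^2/(2*ρ))) := by
                have hs : (0:ℝ) < Real.sqrt (2*π*ρ) := Real.sqrt_pos.2 (by positivity)
                gcongr
            _ = X := by rw [hXdef, hdc]
        exact le_trans hfinal (le_trans hXG hGr)
      -- not summable
      have hns : ¬ Summable r := by
        intro hsum
        obtain ⟨N₀, hN₀⟩ := eventually_atTop.1 hr_lower
        set N₁ := max N₀ 2 with hN₁def
        set g : ℕ → ℝ := fun n => 1 / ((n:ℝ) * Real.log n) with hgdef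
        have hgpos : ∀ m : ℕ, 0 ≤ g (m + N₁) := by
          intro m
          have h2 : (2:ℝ) ≤ ((m + N₁ : ℕ):ℝ) := by
            have : 2 ≤ m + N₁ := le_trans (le_max_right N₀ 2) (Nat.le_add_left N₁ m)
            exact_mod_cast this
          have : 0 < Real.log ((m + N₁:ℕ):ℝ) := Real.log_pos (by linarith)
          have hn0 : (0:ℝ) < ((m+N₁:ℕ):ℝ) := by linarith
          simp only [hgdef]
          positivity
        have h1 : Summable (fun m => r (m + N₁)) := (summable_nat_add_iff N₁).2 hsum
        have h2 : Summable (fun m : ℕ => K2 * g (m + N₁)) := by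
          refine Summable.of_nonneg_of_le (fun m => by have := hgpos m; positivity) (fun m => ?_) h1
          have := hN₀ (m + N₁) (le_trans (le_max_left N₀ 2) (Nat.le_add_left N₁ m))
          simpa [hgdef, mul_one_div, div_eq_mul_inv, mul_comm] using this
        have h3 : Summable (fun m : ℕ => g (m + N₁)) := by
          have := h2.mul_left K2⁻¹
          refine this.congr fun m => ?_
          field_simp
        exact aux_not_summable ((summable_nat_add_iff N₁).1 h3)
      -- partial sums tendsto atTop
      have hT := (not_summable_iff_tendsto_nat_atTop_of_nonneg hr_nonneg).1 hns
      have hrsum : Tendsto (fun M => ∑ i ∈ Finset.Icc N M, r i) atTop atTop := by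
        have heq : ∀ᶠ M in atTop, ∑ i ∈ Finset.range (M+1), r i - ∑ i ∈ Finset.range N, r i
            = ∑ i ∈ Finset.Icc N M, r i := by
          filter_upwards [eventually_ge_atTop N] with M hM
          have h5 := Finset.sum_Ico_consecutive r (Nat.zero_le N) (by omega : N ≤ M+1)
          rw [← Finset.Ico_add_one_right_eq_Icc, Finset.range_eq_Ico, Finset.range_eq_Ico]
          linarith
        refine Tendsto.congr' heq ?_
        have := hT.comp (tendsto_add_atTop_nat 1)
        exact tendsto_atTop_add_const_right atTop _ this
      -- product goes to zero
      have hprod0 : Tendsto (fun M => ∏ i ∈ Finset.Icc N M, p i) atTop (nhds 0) := by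
        have hbound : ∀ M, ∏ i ∈ Finset.Icc N M, p i ≤ Real.exp (-(∑ i ∈ Finset.Icc N M, r i)) := by
          intro M
          calc ∏ i ∈ Finset.Icc N M, p i ≤ ∏ i ∈ Finset.Icc N M, Real.exp (-(r i)) :=
                Finset.prod_le_prod (fun i _ => hp_nonneg i) (fun i _ => by
                  have hpi : p i = -(r i) + 1 := by simp only [hrdef]; ring
                  rw [hpi]; exact Real.add_one_le_exp _)
            _ = Real.exp (∑ i ∈ Finset.Icc N M, -(r i)) := (Real.exp_sum _ _).symm
            _ = Real.exp (-(∑ i ∈ Finset.Icc N M, r i)) := by rw [Finset.sum_neg_distrib]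
        refine squeeze_zero (fun M => Finset.prod_nonneg fun i _ => hp_nonneg i) hbound ?_
        have hnb : Tendsto (fun M => -(∑ i ∈ Finset.Icc N M, r i)) atTop atBot :=
          tendsto_neg_atTop_atBot.comp hrsum
        exact Real.tendsto_exp_atBot.comp hnb
      -- conclude
      have hle : ∀ M, μ {x : ℕ → ℝ | ∀ n ≥ N, |x n| < c n}
          ≤ ENNReal.ofReal (∏ i ∈ Finset.Icc N M, p i) := by
        intro M
        have hsub2 : {x : ℕ → ℝ | ∀ n ≥ N, |x n| < c n}
            ⊆ {x : ℕ → ℝ | ∀ i ∈ Finset.Icc N M, x i ∈ Set.Ioo (-(c i)) (c i)} := by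
          intro x hx i hi
          rw [Finset.mem_Icc] at hi
          exact Set.mem_Ioo.2 (abs_lt.1 (hx i hi.1))
        calc μ {x : ℕ → ℝ | ∀ n ≥ N, |x n| < c n}
            ≤ μ {x | ∀ i ∈ Finset.Icc N M, x i ∈ Set.Ioo (-(c i)) (c i)} := measure_mono hsub2
          _ = ∏ i ∈ Finset.Icc N M, q i := hμ _ _ (fun i _ => measurableSet_Ioo)
          _ = ENNReal.ofReal (∏ i ∈ Finset.Icc N M, p i) := by
              rw [← ENNReal.ofReal_toReal (ENNReal.prod_lt_top (fun i _ => (hq_ne_top i).lt_top)).ne,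
                ENNReal.toReal_prod]
      have h0 : Tendsto (fun M => ENNReal.ofReal (∏ i ∈ Finset.Icc N M, p i)) atTop (nhds 0) := by
        rw [show (0:ℝ≥0∞) = ENNReal.ofReal 0 by simp]
        exact ENNReal.tendsto_ofReal hprod0
      exact le_zero_iff.1 (ge_of_tendsto' h0 hle)
    refine measure_mono_null (fun x hx => ?_)
      ((measure_iUnion_null_iff).2 key :
        μ (⋃ N : ℕ, {x : ℕ → ℝ | ∀ n ≥ N, |x n| < Real.sqrt (2 * ρ * Real.log n)}) = 0)
    obtain ⟨N, _, hN⟩ := hx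
    exact Set.mem_iUnion.2 ⟨N, hN⟩
  · -- Part 2

    have hρpos : 0 < ρ := hρ'.trans hρ
    have hρR : (0:ℝ) < ρ := hρpos
    have hρ'R : (0:ℝ) < ρ' := hρ'
    set c : ℕ → ℝ := fun n => Real.sqrt (2 * ρ * Real.log n) with hcdef
    set S := {x : ℕ → ℝ | ∃ N : ℕ, 2 ≤ N ∧ ∀ n ≥ N, |x n| < c n} with hSdef
    set E : ℕ → Set (ℕ → ℝ) := fun n => {x | c n ≤ |x n|} with hEdef
    have hμ'univ : μ' Set.univ = 1 := by
      have := hμ' ∅ (fun _ => Set.univ) (by simp)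
      simpa using this
    have hE : ∀ n, μ' (E n) = gaussianReal 0 ρ' {y : ℝ | c n ≤ |y|} := by
      intro n
      have := hμ' {n} (fun _ => {y : ℝ | c n ≤ |y|})
        (fun i _ => (isClosed_le continuous_const continuous_abs).measurableSet)
      simpa using this
    set α : ℝ := (ρ:ℝ)/(ρ':ℝ) with hαdef
    have hα : 1 < α := (one_lt_div hρ'R).2 (by exact_mod_cast hρ)
    set C : ℝ := 2 * ((Real.sqrt (2 * π * ρ'))⁻¹ * (2*ρ')) with hCdef
    have hC0 : 0 ≤ C := by
      have : (0:ℝ) < 2*π*ρ' := by positivity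
      positivity
    have hlogT : Tendsto (fun n : ℕ => Real.log n) atTop atTop :=
      Real.tendsto_log_atTop.comp tendsto_natCast_atTop_atTop
    have hbound : ∀ᶠ n : ℕ in atTop, μ' (E n) ≤ ENNReal.ofReal (C * (n:ℝ) ^ (-α)) := by
      filter_upwards [hlogT.eventually_ge_atTop (1/(2*(ρ:ℝ))), eventually_ge_atTop 1] with n hinv hn1
      have hn0 : (0:ℝ) < n := by exact_mod_cast hn1
      have hlognn : 0 ≤ Real.log n := le_trans (by positivity) hinv
      have h1 : 1 ≤ 2 * (ρ:ℝ) * Real.log n := by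
        rw [div_le_iff₀ (by positivity)] at hinv
        linarith
      have hc0 : 0 ≤ c n := Real.sqrt_nonneg _
      have hc2 : (c n)^2 = 2 * ρ * Real.log n := Real.sq_sqrt (by positivity)
      have hc1 : 1 ≤ c n := by nlinarith [sq_nonneg (c n - 1), sq_nonneg (c n + 1)]
      have hcn0 : 0 < c n := lt_of_lt_of_le one_pos hc1
      have hexp : Real.exp (-(c n)^2/(2*(ρ':ℝ))) = (n:ℝ) ^ (-α) := by
        rw [Real.rpow_def_of_pos hn0]
        congr 1
        rw [hc2, hαdef]
        field_simp
      calc μ' (E n) = gaussianReal 0 ρ' {y : ℝ | c n ≤ |y|} := hE n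
        _ ≤ ENNReal.ofReal (2 * ((Real.sqrt (2 * π * ρ'))⁻¹ * ((2*ρ'/(c n)) * Real.exp (-(c n)^2 / (2*ρ'))))) :=
            gaussian_abs_tail ρ' hρ'.ne' hcn0
        _ ≤ ENNReal.ofReal (C * (n:ℝ) ^ (-α)) := by
            refine ENNReal.ofReal_le_ofReal ?_
            rw [hexp.symm]
            rw [hCdef]
            have h2 : 2*(ρ':ℝ)/(c n) ≤ 2*ρ' := by
              rw [div_le_iff₀ hcn0]
              nlinarith
            have hs : (0:ℝ) < Real.sqrt (2*π*ρ') := Real.sqrt_pos.2 (by positivity)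
            have he0 : 0 < Real.exp (-(c n)^2/(2*(ρ':ℝ))) := Real.exp_pos _
            calc 2 * ((Real.sqrt (2 * π * ρ'))⁻¹ * ((2*ρ'/(c n)) * Real.exp (-(c n)^2 / (2*ρ'))))
                ≤ 2 * ((Real.sqrt (2 * π * ρ'))⁻¹ * ((2*ρ') * Real.exp (-(c n)^2 / (2*ρ')))) := by
                  gcongr
              _ = 2 * ((Real.sqrt (2 * π * ρ'))⁻¹ * (2*ρ')) * Real.exp (-(c n)^2/(2*(ρ':ℝ))) := by ring
    have hsummable : Summable (fun n : ℕ => C * (n:ℝ) ^ (-α)) := by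
      refine Summable.mul_left C ?_
      exact Real.summable_nat_rpow.2 (by linarith)
    have htsum : ∑' n, μ' (E n) ≠ ⊤ := by
      obtain ⟨N₁, hN₁⟩ := eventually_atTop.1 hbound
      have hsplit := (Summable.sum_add_tsum_nat_add' (f := fun n => μ' (E n)) (k := N₁) ENNReal.summable).symm
      rw [hsplit]
      refine ENNReal.add_ne_top.2 ⟨?_, ?_⟩
      · have hfin : ∀ i, μ' (E i) ≤ 1 := fun i => le_trans (measure_mono (Set.subset_univ _)) hμ'univ.le
        refine ne_of_lt ?_
        calc ∑ i ∈ Finset.range N₁, μ' (E i) ≤ ∑ _i ∈ Finset.range N₁, 1 :=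
              Finset.sum_le_sum fun i _ => hfin i
          _ = (N₁ : ℝ≥0∞) := by simp
          _ < ⊤ := ENNReal.natCast_lt_top _
      · have hle : ∑' n : ℕ, μ' (E (n + N₁)) ≤ ∑' n : ℕ, ENNReal.ofReal (C * ((n + N₁ : ℕ):ℝ) ^ (-α)) :=
          ENNReal.tsum_le_tsum fun n => hN₁ (n + N₁) (Nat.le_add_left _ _)
        refine (lt_of_le_of_lt hle ?_).ne
        rw [← ENNReal.ofReal_tsum_of_nonneg (fun n => by positivity) ((summable_nat_add_iff N₁).2 hsummable)]
        exact ENNReal.ofReal_lt_top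
    have hlimsup : μ' (limsup E atTop) = 0 := measure_limsup_atTop_eq_zero htsum
    have hSc : Sᶜ ⊆ limsup E atTop := by
      intro x hx
      rw [Set.mem_compl_iff, hSdef, Set.mem_setOf_eq] at hx
      push_neg at hx
      rw [mem_limsup_iff_frequently_mem, frequently_atTop]
      intro a
      obtain ⟨n, hn, hb⟩ := hx (max a 2) (le_max_right a 2)
      exact ⟨n, le_trans (le_max_left a 2) hn, hb⟩
    have hSc0 : μ' Sᶜ = 0 := measure_mono_null hSc hlimsup
    have h2 : (1:ℝ≥0∞) ≤ μ' S := by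
      calc (1:ℝ≥0∞) = μ' Set.univ := hμ'univ.symm
        _ = μ' (S ∪ Sᶜ) := by rw [Set.union_compl_self]
        _ ≤ μ' S + μ' Sᶜ := measure_union_le _ _
        _ = μ' S := by rw [hSc0, add_zero]
    exact le_antisymm (le_trans (measure_mono (Set.subset_univ _)) hμ'univ.le) h2
end

section
/- Let 0 < ρ' < ρ and ε > 0. Define S₂ := { x ∈ ℝ^ℕ : there exists N ≥ 2 such that |x_n| < √(2(1+ε)ρ·ln n) for all n ≥ N } and S₁ := { x ∈ ℝ^ℕ : there exists N ≥ 2 such that |x_n| < √(2ρ·ln n) for all n ≥ N }. Then the difference set A := S₂ \ S₁ satisfies μ_ρ(A) = 1 and μ_{ρ'}(A) = 0. -/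
open MeasureTheory ProbabilityTheory
open scoped NNReal ENNReal

open Filter

lemma gauss_deriv (v : ℝ≥0) (hv : v ≠ 0) (x : ℝ) :
    HasDerivAt (fun y : ℝ => -(v:ℝ) * Real.exp (-y^2/(2*v)))
      (x * Real.exp (-x^2/(2*v))) x := by
  have hv' : (0:ℝ) < v := by positivity
  have h1 : HasDerivAt (fun y : ℝ => -y^2/(2*v)) (-x/v) x := by
    have : HasDerivAt (fun y : ℝ => -y^2/(2*v)) (-(2*x)/(2*v)) x := by
      have := ((hasDerivAt_pow 2 x).neg).div_const (2*(v:ℝ))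
      simpa [pow_one] using this
    convert this using 1
    field_simp
  have h2 := (h1.exp).const_mul (-(v:ℝ))
  refine h2.congr_deriv ?_
  linear_combination (x * Real.exp (-x^2/(2*v))) * mul_inv_cancel₀ hv'.ne'

lemma gauss_lim (v : ℝ≥0) (hv : v ≠ 0) :
    Tendsto (fun y : ℝ => -(v:ℝ) * Real.exp (-y^2/(2*v))) atTop (nhds 0) := by
  have hv' : (0:ℝ) < v := by positivity
  rw [show (0:ℝ) = -(v:ℝ) * 0 by ring]
  refine Tendsto.const_mul _ ?_
  refine Real.tendsto_exp_atBot.comp ?_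
  have h : Tendsto (fun y : ℝ => y^2/(2*(v:ℝ))) atTop atTop :=
    (tendsto_pow_atTop two_ne_zero).atTop_div_const (by positivity)
  have := tendsto_neg_atTop_atBot.comp h
  refine this.congr fun y => ?_
  simp [neg_div]

lemma gauss_integral_tail (v : ℝ≥0) (hv : v ≠ 0) (t : ℝ) (ht : 0 < t) :
    ∫ x in Set.Ioi t, x * Real.exp (-x^2 / (2*v)) = v * Real.exp (-t^2 / (2*v)) := by
  have := integral_Ioi_of_hasDerivAt_of_nonneg (g' := fun x => x * Real.exp (-x^2/(2*v)))
    (gauss_deriv v hv t).continuousAt.continuousWithinAt (fun x hx => gauss_deriv v hv x)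
    (fun x hx => by
      have : (0:ℝ) < x := lt_trans ht hx.out
      positivity) (gauss_lim v hv)
  rw [this]
  ring

lemma gauss_integrable_tail (v : ℝ≥0) (hv : v ≠ 0) (t : ℝ) (ht : 0 < t) :
    IntegrableOn (fun x => x * Real.exp (-x^2 / (2*v))) (Set.Ioi t) := by
  exact integrableOn_Ioi_deriv_of_nonneg (gauss_deriv v hv t).continuousAt.continuousWithinAt
    (fun x hx => gauss_deriv v hv x)
    (fun x hx => by
      have : (0:ℝ) < x := lt_trans ht hx.out
      positivity) (gauss_lim v hv)

lemma gauss_Ici_le (v : ℝ≥0) (hv : v ≠ 0) {t : ℝ} (ht : 1 ≤ t) :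
    gaussianReal 0 v (Set.Ici t) ≤
      ENNReal.ofReal ((Real.sqrt (2*Real.pi*v))⁻¹ * v * Real.exp (-t^2/(2*v))) := by
  have ht0 : (0:ℝ) < t := lt_of_lt_of_le one_pos ht
  rw [gaussianReal_apply 0 hv]
  have hIoi : (Set.Ici t : Set ℝ) =ᵐ[volume] Set.Ioi t := Ioi_ae_eq_Ici.symm
  rw [setLIntegral_congr hIoi]
  have step1 : ∫⁻ x in Set.Ioi t, gaussianPDF 0 v x
      ≤ ∫⁻ x in Set.Ioi t, ENNReal.ofReal ((Real.sqrt (2*Real.pi*v))⁻¹ *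
          (x * Real.exp (-x^2/(2*v)))) := by
    refine setLIntegral_mono (by fun_prop) ?_
    intro x hx
    have hx1 : (1:ℝ) ≤ x := le_of_lt (lt_of_le_of_lt ht hx)
    rw [gaussianPDF]
    refine ENNReal.ofReal_le_ofReal ?_
    rw [gaussianPDFReal]
    have h : Real.exp (-(x-0)^2/(2*v)) ≤ x * Real.exp (-x^2/(2*v)) := by
      rw [sub_zero]
      nlinarith [Real.exp_pos (-x^2/(2*(v:ℝ)))]
    have hc : (0:ℝ) ≤ (Real.sqrt (2*Real.pi*v))⁻¹ := by positivity
    exact mul_le_mul_of_nonneg_left h hc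
  refine step1.trans (le_of_eq ?_)
  rw [← ofReal_integral_eq_lintegral_ofReal]
  · rw [integral_const_mul, gauss_integral_tail v hv t ht0]
    ring_nf
  · exact ((gauss_integrable_tail v hv t ht0).const_mul _)
  · rw [EventuallyLE, ae_restrict_iff' measurableSet_Ioi]
    filter_upwards with x hx
    have hx0 : (0:ℝ) < x := lt_trans ht0 hx
    positivity

lemma gauss_neg_symm (v : ℝ≥0) (hv : v ≠ 0) (t : ℝ) :
    gaussianReal 0 v (Set.Iic (-t)) = gaussianReal 0 v (Set.Ici t) := by
  have hmap : (gaussianReal 0 v).map (fun x => (-1 : ℝ) * x) = gaussianReal 0 v := by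
    rw [gaussianReal_map_const_mul (-1 : ℝ)]
    congr 1
    · norm_num
    · ext
      push_cast
      norm_num
  conv_rhs => rw [← hmap]
  rw [Measure.map_apply (by fun_prop) measurableSet_Ici]
  congr 1
  ext x
  simp only [Set.mem_preimage, Set.mem_Ici, Set.mem_Iic]
  constructor <;> intro h <;> linarith

lemma gauss_tail_le (v : ℝ≥0) (hv : v ≠ 0) {t : ℝ} (ht : 1 ≤ t) :
    gaussianReal 0 v {x : ℝ | t ≤ |x|} ≤
      ENNReal.ofReal (2 * ((Real.sqrt (2*Real.pi*v))⁻¹ * v) * Real.exp (-t^2/(2*v))) := by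
  have hsub : {x : ℝ | t ≤ |x|} ⊆ Set.Iic (-t) ∪ Set.Ici t := by
    intro x hx
    simp only [Set.mem_setOf_eq] at hx
    rcases le_abs.mp hx with h | h
    · exact Or.inr h
    · exact Or.inl (by simpa [Set.mem_Iic] using by linarith)
  refine (measure_mono hsub).trans ((measure_union_le _ _).trans ?_)
  rw [gauss_neg_symm v hv t]
  have h := gauss_Ici_le v hv ht
  calc gaussianReal 0 v (Set.Ici t) + gaussianReal 0 v (Set.Ici t)
      ≤ ENNReal.ofReal ((Real.sqrt (2*Real.pi*v))⁻¹ * v * Real.exp (-t^2/(2*v))) +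
        ENNReal.ofReal ((Real.sqrt (2*Real.pi*v))⁻¹ * v * Real.exp (-t^2/(2*v))) :=
        add_le_add h h
    _ = ENNReal.ofReal (2 * ((Real.sqrt (2*Real.pi*v))⁻¹ * v) * Real.exp (-t^2/(2*v))) := by
        rw [← ENNReal.ofReal_add (by positivity) (by positivity)]
        ring_nf

lemma IsProductGaussian.prob {ρ : ℝ≥0} {μ : Measure (ℕ → ℝ)}
    (hμ : IsProductGaussian ρ μ) : IsProbabilityMeasure μ := by
  constructor
  have := hμ ∅ (fun _ => Set.univ) (by simp)
  simpa using this

lemma IsProductGaussian.marginal {ρ : ℝ≥0} {μ : Measure (ℕ → ℝ)}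
    (hμ : IsProductGaussian ρ μ) {n : ℕ} {A : Set ℝ} (hA : MeasurableSet A) :
    μ ((fun x => x n) ⁻¹' A) = gaussianReal 0 ρ A := by
  have := hμ {n} (fun _ => A) (by simp [hA])
  simp at this; exact this

lemma IsProductGaussian.indep {ρ : ℝ≥0} {μ : Measure (ℕ → ℝ)}
    (hμ : IsProductGaussian ρ μ) {B : ℕ → Set ℝ} (hB : ∀ n, MeasurableSet (B n)) :
    iIndepSet (fun n => (fun x : ℕ → ℝ => x n) ⁻¹' (B n)) μ := by
  rw [iIndepSet_iff_meas_biInter (fun n => (measurable_pi_apply n) (hB n))]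
  intro s
  have h1 : (⋂ i ∈ s, (fun x : ℕ → ℝ => x i) ⁻¹' (B i)) = {x : ℕ → ℝ | ∀ i ∈ s, x i ∈ B i} := by
    ext x; simp
  rw [h1, hμ s B (fun i _ => hB i)]
  exact Finset.prod_congr rfl fun i _ => (hμ.marginal (hB i)).symm

lemma set_eq_compl_limsup (c : ℕ → ℝ) :
    {x : ℕ → ℝ | ∃ N : ℕ, 2 ≤ N ∧ ∀ n ≥ N, |x n| < c n} =
      (limsup (fun n => {x : ℕ → ℝ | c n ≤ |x n|}) atTop)ᶜ := by
  ext x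
  simp only [Set.mem_compl_iff, mem_limsup_iff_frequently_mem, Filter.not_frequently,
    Set.mem_setOf_eq, not_le, eventually_atTop]
  constructor
  · rintro ⟨N, -, hN⟩
    exact ⟨N, hN⟩
  · rintro ⟨N, hN⟩
    exact ⟨max N 2, le_max_right _ _, fun n hn => hN n (le_trans (le_max_left _ _) hn)⟩

lemma tsum_ofReal_ne_top {f : ℕ → ℝ} (hf : Summable f) :
    ∑' n, ENNReal.ofReal (f n) ≠ ⊤ := by
  have : ∀ n, ENNReal.ofReal (f n) = ((f n).toNNReal : ℝ≥0∞) := fun n => rfl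
  simp_rw [this]
  rw [ENNReal.tsum_coe_ne_top_iff_summable]
  have h1 : Summable (fun n => |f n|) := hf.abs
  refine NNReal.summable_coe.mp ?_
  refine Summable.of_nonneg_of_le (fun n => NNReal.coe_nonneg _) (fun n => ?_) h1
  rw [Real.coe_toNNReal']
  exact le_trans (max_le_iff.mpr ⟨le_abs_self _, abs_nonneg _⟩) le_rfl

lemma tsum_ne_top_of_eventually {a : ℕ → ℝ≥0∞} {f : ℕ → ℝ} (N : ℕ)
    (ha : ∀ n, a n ≠ ⊤) (hle : ∀ n, N ≤ n → a n ≤ ENNReal.ofReal (f n))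
    (hf : Summable f) : ∑' n, a n ≠ ⊤ := by
  have hpt : ∀ n, a n ≤ (if n < N then a n else 0) + ENNReal.ofReal (f n) := by
    intro n
    by_cases h : n < N
    · simp [h]
    · simp only [h, if_false, zero_add]
      exact hle n (not_lt.mp h)
  refine ne_top_of_le_ne_top ?_ (ENNReal.tsum_le_tsum hpt)
  rw [ENNReal.tsum_add]
  refine ENNReal.add_ne_top.mpr ⟨?_, tsum_ofReal_ne_top hf⟩
  rw [tsum_eq_sum (s := Finset.range N)
    (by intro n hn; simp [Finset.mem_range.not.mp hn])]
  refine (ENNReal.sum_lt_top.mpr (fun n _ => ?_)).ne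
  split
  · exact lt_top_iff_ne_top.mpr (ha n)
  · exact ENNReal.zero_lt_top

lemma not_summable_inv_sqrt : ¬ Summable (fun n : ℕ => (Real.sqrt n)⁻¹) := by
  intro h
  have h2 : Summable (fun n : ℕ => ((n:ℝ) ^ ((2:ℝ)⁻¹))⁻¹) := by
    refine h.congr fun n => ?_
    rw [Real.sqrt_eq_rpow]
    norm_num
  rw [Real.summable_nat_rpow_inv] at h2
  norm_num at h2

lemma tsum_ofReal_inv_sqrt_eq_top {K : ℝ} (hK : 0 < K) :
    ∑' k : ℕ, ENNReal.ofReal (K / Real.sqrt k) = ⊤ := by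
  by_contra h
  have h1 : Summable (fun k : ℕ => (K / Real.sqrt k).toNNReal) := by
    rw [← ENNReal.tsum_coe_ne_top_iff_summable]
    exact h
  have h2 : Summable (fun k : ℕ => K / Real.sqrt k) := by
    have := NNReal.summable_coe.mpr h1
    refine this.congr fun k => ?_
    rw [Real.coe_toNNReal _ (by positivity)]
  have h3 : Summable (fun k : ℕ => (Real.sqrt k)⁻¹) := by
    have := h2.mul_left K⁻¹
    refine this.congr fun k => ?_
    field_simp
  exact not_summable_inv_sqrt h3

lemma tsum_log_eq_top {K : ℝ} (hK : 0 < K) :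
    ∑' n : ℕ, (if 2 ≤ n then
      ENNReal.ofReal (K / (n * Real.sqrt (Real.log n))) else 0) = ⊤ := by
  set g : ℕ → ℝ≥0∞ := fun n => if 2 ≤ n then
      ENNReal.ofReal (K / (n * Real.sqrt (Real.log n))) else 0 with hg
  by_contra h
  have hmono : ∀ ⦃m n : ℕ⦄, 1 < m → m ≤ n → g n ≤ g m := by
    intro m n hm hmn
    have hm2 : 2 ≤ m := hm
    have hn2 : 2 ≤ n := le_trans hm2 hmn
    simp only [hg, hm2, hn2, if_true]
    refine ENNReal.ofReal_le_ofReal ?_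
    have hmr : (1:ℝ) < m := by exact_mod_cast hm
    have hnr : (1:ℝ) < n := lt_of_lt_of_le hmr (by exact_mod_cast hmn)
    have hlogm : 0 < Real.log m := Real.log_pos hmr
    have hden : (0:ℝ) < m * Real.sqrt (Real.log m) := by positivity
    refine div_le_div_of_nonneg_left hK.le hden ?_
    have h1 : Real.log m ≤ Real.log n := Real.log_le_log (by linarith) (by exact_mod_cast hmn)
    refine mul_le_mul (by exact_mod_cast hmn) (Real.sqrt_le_sqrt h1) (Real.sqrt_nonneg _)
      (by positivity)
  have hcond := ENNReal.tsum_condensed_le hmono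
  have hg1 : g 1 = 0 := by simp [hg]
  have hne : (g 1 + 2 * ∑' k, g k) ≠ ⊤ := by
    rw [hg1, zero_add]
    exact ENNReal.mul_ne_top (by norm_num) h
  have hlow : ∀ k : ℕ, ENNReal.ofReal (K / Real.sqrt k) ≤ 2^k * g (2^k) := by
    intro k
    rcases Nat.eq_zero_or_pos k with rfl | hk
    · simp
    · have h2k : 2 ≤ 2^k := by
        calc 2 = 2^1 := (pow_one 2).symm
        _ ≤ 2^k := Nat.pow_le_pow_right (by norm_num) hk
      simp only [hg, h2k, if_true]
      have hcast : ((2^k : ℕ) : ℝ) = (2:ℝ)^k := by push_cast; ring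
      rw [hcast, Real.log_pow]
      have h2e : (2:ℝ≥0∞)^k = ENNReal.ofReal ((2:ℝ)^k) := by
        rw [ENNReal.ofReal_pow (by norm_num)]
        norm_num
      rw [h2e, ← ENNReal.ofReal_mul (by positivity)]
      refine ENNReal.ofReal_le_ofReal ?_
      have hkr : (1:ℝ) ≤ k := by exact_mod_cast hk
      have heq : (2:ℝ)^k * (K / ((2:ℝ)^k * Real.sqrt (k * Real.log 2)))
          = K / Real.sqrt (k * Real.log 2) := by
        have : ((2:ℝ)^k) ≠ 0 := by positivity
        field_simp
      rw [heq]
      have hd1 : (0:ℝ) < Real.sqrt (k * Real.log 2) := by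
        have : (0:ℝ) < Real.log 2 := Real.log_pos (by norm_num)
        positivity
      refine div_le_div_of_nonneg_left hK.le hd1 ?_
      refine Real.sqrt_le_sqrt ?_
      have hlog2 : Real.log 2 ≤ 1 := by
        have := Real.log_le_sub_one_of_pos (x := 2) (by norm_num)
        linarith
      nlinarith [hkr]
  have htop : ∑' k : ℕ, 2^k * g (2^k) = ⊤ := by
    refine eq_top_iff.mpr ?_
    rw [← tsum_ofReal_inv_sqrt_eq_top hK]
    exact ENNReal.tsum_le_tsum hlow
  exact hne (eq_top_iff.mpr (htop ▸ hcond))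

lemma tsum_eq_top_of_eventually_ge {a g : ℕ → ℝ≥0∞} (N : ℕ)
    (hg : ∀ n, g n ≠ ⊤) (hle : ∀ n, N ≤ n → g n ≤ a n) (htop : ∑' n, g n = ⊤) :
    ∑' n, a n = ⊤ := by
  have hpt : ∀ n, g n ≤ (if n < N then g n else 0) + a n := by
    intro n
    by_cases h : n < N
    · simp only [h, if_true]
      exact le_add_right le_rfl
    · simp only [h, if_false, zero_add]
      exact hle n (not_lt.mp h)
  have hfin : ∑' n, (if n < N then g n else 0) ≠ ⊤ := by
    rw [tsum_eq_sum (s := Finset.range N)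
      (by intro n hn; simp [Finset.mem_range.not.mp hn])]
    refine (ENNReal.sum_lt_top.mpr (fun n _ => ?_)).ne
    split
    · exact lt_top_iff_ne_top.mpr (hg n)
    · exact ENNReal.zero_lt_top
  by_contra ha
  have := le_trans (htop ▸ ENNReal.tsum_le_tsum hpt : (⊤:ℝ≥0∞) ≤ _) (le_of_eq (ENNReal.tsum_add))
  rw [top_le_iff, ENNReal.add_eq_top] at this
  rcases this with h | h
  · exact hfin h
  · exact ha h

lemma gauss_tail_ge (v : ℝ≥0) (hv : v ≠ 0) {t : ℝ} (ht : 1 ≤ t) :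
    ENNReal.ofReal ((Real.sqrt (2*Real.pi*v))⁻¹ * Real.exp (-(t^2+3)/(2*v)) * t⁻¹) ≤
      gaussianReal 0 v {x : ℝ | t ≤ |x|} := by
  have ht0 : (0:ℝ) < t := lt_of_lt_of_le one_pos ht
  have hsub : Set.Ico t (t + t⁻¹) ⊆ {x : ℝ | t ≤ |x|} := by
    intro x hx
    have : t ≤ x := hx.1
    simp only [Set.mem_setOf_eq]
    rw [abs_of_nonneg (le_trans ht0.le this)]
    exact this
  refine le_trans ?_ (measure_mono hsub)
  rw [gaussianReal_apply 0 hv]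
  have hlow : ∀ x ∈ Set.Ico t (t + t⁻¹),
      ENNReal.ofReal ((Real.sqrt (2*Real.pi*v))⁻¹ * Real.exp (-(t^2+3)/(2*v)))
        ≤ gaussianPDF 0 v x := by
    intro x hx
    rw [gaussianPDF, gaussianPDFReal]
    refine ENNReal.ofReal_le_ofReal ?_
    refine mul_le_mul_of_nonneg_left ?_ (by positivity)
    refine Real.exp_le_exp.mpr ?_
    rw [sub_zero]
    have hxt : t ≤ x := hx.1
    have hxu : x < t + t⁻¹ := hx.2
    have h1 : x^2 ≤ (t + t⁻¹)^2 := by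
      have hx0 : (0:ℝ) ≤ x := le_trans ht0.le hxt
      nlinarith
    have h2 : (t + t⁻¹)^2 ≤ t^2 + 3 := by
      have hinv : t⁻¹ ≤ 1 := by
        rw [inv_le_one_iff₀]; right; exact ht
      have hinv0 : (0:ℝ) < t⁻¹ := by positivity
      nlinarith [mul_inv_cancel₀ ht0.ne']
    have hv0 : (0:ℝ) < 2*(v:ℝ) := by positivity
    gcongr
    linarith
  calc ENNReal.ofReal ((Real.sqrt (2*Real.pi*v))⁻¹ * Real.exp (-(t^2+3)/(2*v)) * t⁻¹)
      = ENNReal.ofReal ((Real.sqrt (2*Real.pi*v))⁻¹ * Real.exp (-(t^2+3)/(2*v))) *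
        volume (Set.Ico t (t + t⁻¹)) := by
        rw [Real.volume_Ico, show t + t⁻¹ - t = t⁻¹ by ring,
          ← ENNReal.ofReal_mul (by positivity)]
    _ = ∫⁻ _x in Set.Ico t (t + t⁻¹),
          ENNReal.ofReal ((Real.sqrt (2*Real.pi*v))⁻¹ * Real.exp (-(t^2+3)/(2*v))) := by
        rw [setLIntegral_const]
    _ ≤ ∫⁻ x in Set.Ico t (t + t⁻¹), gaussianPDF 0 v x := by
        refine setLIntegral_mono (measurable_gaussianPDF 0 v) hlow

/-- The difference set `S₂ \ S₁` has `μ_ρ`-measure one and `μ_{ρ'}`-measure zero,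
for `0 < ρ' < ρ` and any `ε > 0`. -/
theorem gaussian_product_measure_difference_set (ρ ρ' : ℝ≥0) (hρ' : 0 < ρ') (hρ : ρ' < ρ)
    (ε : ℝ) (hε : 0 < ε) (μ μ' : Measure (ℕ → ℝ))
    (hμ : IsProductGaussian ρ μ) (hμ' : IsProductGaussian ρ' μ') :
    μ ({x : ℕ → ℝ | ∃ N : ℕ, 2 ≤ N ∧
          ∀ n ≥ N, |x n| < Real.sqrt (2 * (1 + ε) * ρ * Real.log n)} \
       {x : ℕ → ℝ | ∃ N : ℕ, 2 ≤ N ∧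
          ∀ n ≥ N, |x n| < Real.sqrt (2 * ρ * Real.log n)}) = 1 ∧
    μ' ({x : ℕ → ℝ | ∃ N : ℕ, 2 ≤ N ∧
          ∀ n ≥ N, |x n| < Real.sqrt (2 * (1 + ε) * ρ * Real.log n)} \
       {x : ℕ → ℝ | ∃ N : ℕ, 2 ≤ N ∧
          ∀ n ≥ N, |x n| < Real.sqrt (2 * ρ * Real.log n)}) = 0 := by

  haveI := hμ.prob
  haveI := hμ'.prob
  have hρ0 : ρ ≠ 0 := (hρ'.trans hρ).ne'
  have hρ'0 : ρ' ≠ 0 := hρ'.ne'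
  have hρr : (0:ℝ) < ρ := by exact_mod_cast hρ'.trans hρ
  have hρ'r : (0:ℝ) < ρ' := by exact_mod_cast hρ'
  set c₂ : ℕ → ℝ := fun n => Real.sqrt (2 * (1 + ε) * ρ * Real.log n) with hc₂
  set c₁ : ℕ → ℝ := fun n => Real.sqrt (2 * ρ * Real.log n) with hc₁
  set B₂ : ℕ → Set ℝ := fun n => {y : ℝ | c₂ n ≤ |y|} with hB₂def
  set B₁ : ℕ → Set ℝ := fun n => {y : ℝ | c₁ n ≤ |y|} with hB₁def
  have hB₂ : ∀ n, MeasurableSet (B₂ n) :=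
    fun n => (isClosed_le continuous_const continuous_abs).measurableSet
  have hB₁ : ∀ n, MeasurableSet (B₁ n) :=
    fun n => (isClosed_le continuous_const continuous_abs).measurableSet
  set E₂ : ℕ → Set (ℕ → ℝ) := fun n => {x : ℕ → ℝ | c₂ n ≤ |x n|} with hE₂def
  set E₁ : ℕ → Set (ℕ → ℝ) := fun n => {x : ℕ → ℝ | c₁ n ≤ |x n|} with hE₁def
  have hE₂pre : ∀ n, E₂ n = (fun x : ℕ → ℝ => x n) ⁻¹' (B₂ n) := fun n => rfl
  have hE₁pre : ∀ n, E₁ n = (fun x : ℕ → ℝ => x n) ⁻¹' (B₁ n) := fun n => rfl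
  have hE₂m : ∀ n, MeasurableSet (E₂ n) := fun n => by
    rw [hE₂pre]; exact (measurable_pi_apply n) (hB₂ n)
  have hE₁m : ∀ n, MeasurableSet (E₁ n) := fun n => by
    rw [hE₁pre]; exact (measurable_pi_apply n) (hB₁ n)
  -- eventual largeness of log
  have hlog : Tendsto (fun n : ℕ => Real.log n) atTop atTop :=
    Real.tendsto_log_atTop.comp tendsto_natCast_atTop_atTop
  -- (1) μ (limsup E₂) = 0
  have h20 : μ (limsup E₂ atTop) = 0 := by
    apply measure_limsup_atTop_eq_zero
    obtain ⟨N₂, hN₂⟩ := (eventually_atTop.mp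
      ((hlog.eventually_ge_atTop (max 1 (1/(2*(1+ε)*ρ)))).and (eventually_ge_atTop 2)))
    refine tsum_ne_top_of_eventually N₂ (fun n => measure_ne_top μ _) (fun n hn => ?_)
      ((Real.summable_nat_rpow_inv.mpr (by linarith : (1:ℝ) < 1 + ε)).mul_left
        (2 * ((Real.sqrt (2*Real.pi*ρ))⁻¹ * ρ)))
    obtain ⟨hln, hn2⟩ := hN₂ n hn
    have hlog1 : (1:ℝ) ≤ Real.log n := le_trans (le_max_left _ _) hln
    have hloginv : 1/(2*(1+ε)*(ρ:ℝ)) ≤ Real.log n := le_trans (le_max_right _ _) hln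
    have hargpos : (1:ℝ) ≤ 2 * (1+ε) * ρ * Real.log n := by
      rw [div_le_iff₀ (by positivity)] at hloginv
      linarith [hloginv]
    have ht : (1:ℝ) ≤ c₂ n := by
      rw [hc₂]
      exact Real.one_le_sqrt.mpr hargpos
    have hnr : (0:ℝ) < n := by
      have : (2:ℕ) ≤ n := hn2
      positivity
    rw [hE₂pre, hμ.marginal (hB₂ n)]
    refine (gauss_tail_le ρ hρ0 ht).trans (ENNReal.ofReal_le_ofReal ?_)
    have hsq : (c₂ n)^2 = 2 * (1+ε) * ρ * Real.log n := Real.sq_sqrt (by linarith)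
    rw [hsq]
    have hexp : Real.exp (-(2 * (1+ε) * ρ * Real.log n)/(2*ρ)) = ((n:ℝ) ^ ((1+ε):ℝ))⁻¹ := by
      rw [show -(2 * (1+ε) * (ρ:ℝ) * Real.log n)/(2*ρ) = Real.log n * (-(1+ε)) by
        field_simp]
      rw [← Real.rpow_def_of_pos hnr, Real.rpow_neg hnr.le]
    rw [hexp]
  -- (2) μ (limsup E₁) = 1
  have h11 : μ (limsup E₁ atTop) = 1 := by
    refine ProbabilityTheory.measure_limsup_eq_one hE₁m ?_ ?_
    · have := hμ.indep hB₁
      exact this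
    · set K : ℝ := (Real.sqrt (2*Real.pi*ρ))⁻¹ * Real.exp (-3/(2*ρ)) * (Real.sqrt (2*ρ))⁻¹
        with hKdef
      have hK : 0 < K := by rw [hKdef]; positivity
      obtain ⟨N₁, hN₁⟩ := (eventually_atTop.mp
        ((hlog.eventually_ge_atTop (max 1 (1/(2*ρ)))).and (eventually_ge_atTop 2)))
      refine tsum_eq_top_of_eventually_ge N₁ (fun n => ?_) (fun n hn => ?_) (tsum_log_eq_top hK)
      · split <;> simp [ENNReal.ofReal_ne_top]
      · obtain ⟨hln, hn2⟩ := hN₁ n hn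
        have hlog1 : (1:ℝ) ≤ Real.log n := le_trans (le_max_left _ _) hln
        have hloginv : 1/(2*(ρ:ℝ)) ≤ Real.log n := le_trans (le_max_right _ _) hln
        have hargpos : (1:ℝ) ≤ 2 * ρ * Real.log n := by
          rw [div_le_iff₀ (by positivity)] at hloginv
          linarith [hloginv]
        have ht : (1:ℝ) ≤ c₁ n := by
          rw [hc₁]
          exact Real.one_le_sqrt.mpr hargpos
        have hnr : (0:ℝ) < n := by
          have : (2:ℕ) ≤ n := hn2
          positivity
        rw [if_pos hn2, hE₁pre, hμ.marginal (hB₁ n)]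
        refine le_trans (ENNReal.ofReal_le_ofReal (le_of_eq ?_)) (gauss_tail_ge ρ hρ0 ht)
        have hsq : (c₁ n)^2 = 2 * ρ * Real.log n := Real.sq_sqrt (by linarith)
        rw [hsq]
        have hsplit : c₁ n = Real.sqrt (2*ρ) * Real.sqrt (Real.log n) := by
          rw [hc₁, ← Real.sqrt_mul (by positivity)]
        have hexp : Real.exp (-(2 * (ρ:ℝ) * Real.log n + 3)/(2*ρ))
            = (n:ℝ)⁻¹ * Real.exp (-3/(2*ρ)) := by
          rw [show -(2 * (ρ:ℝ) * Real.log n + 3)/(2*ρ) = -Real.log n + -3/(2*ρ) by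
            field_simp; ring]
          rw [Real.exp_add, Real.exp_neg, Real.exp_log hnr]
        rw [hexp, hsplit, mul_inv, hKdef]
        have h1 : Real.sqrt (Real.log n) ≠ 0 := by positivity
        have h2 : (n:ℝ) ≠ 0 := hnr.ne'
        field_simp
  -- (3) μ' (limsup E₁) = 0
  have h1'0 : μ' (limsup E₁ atTop) = 0 := by
    apply measure_limsup_atTop_eq_zero
    have hp : (1:ℝ) < (ρ:ℝ)/(ρ':ℝ) := (one_lt_div hρ'r).mpr (by exact_mod_cast hρ)
    obtain ⟨N₃, hN₃⟩ := (eventually_atTop.mp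
      ((hlog.eventually_ge_atTop (max 1 (1/(2*ρ)))).and (eventually_ge_atTop 2)))
    refine tsum_ne_top_of_eventually N₃ (fun n => measure_ne_top μ' _) (fun n hn => ?_)
      ((Real.summable_nat_rpow_inv.mpr hp).mul_left
        (2 * ((Real.sqrt (2*Real.pi*ρ'))⁻¹ * ρ')))
    obtain ⟨hln, hn2⟩ := hN₃ n hn
    have hlog1 : (1:ℝ) ≤ Real.log n := le_trans (le_max_left _ _) hln
    have hloginv : 1/(2*(ρ:ℝ)) ≤ Real.log n := le_trans (le_max_right _ _) hln
    have hargpos : (1:ℝ) ≤ 2 * ρ * Real.log n := by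
      rw [div_le_iff₀ (by positivity)] at hloginv
      linarith [hloginv]
    have ht : (1:ℝ) ≤ c₁ n := by
      rw [hc₁]
      exact Real.one_le_sqrt.mpr hargpos
    have hnr : (0:ℝ) < n := by
      have : (2:ℕ) ≤ n := hn2
      positivity
    rw [hE₁pre, hμ'.marginal (hB₁ n)]
    refine (gauss_tail_le ρ' hρ'0 ht).trans (ENNReal.ofReal_le_ofReal ?_)
    have hsq : (c₁ n)^2 = 2 * ρ * Real.log n := Real.sq_sqrt (by linarith)
    rw [hsq]
    have hexp : Real.exp (-(2 * (ρ:ℝ) * Real.log n)/(2*ρ')) = ((n:ℝ) ^ ((ρ:ℝ)/(ρ':ℝ)))⁻¹ := by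
      rw [show -(2 * (ρ:ℝ) * Real.log n)/(2*ρ') = Real.log n * (-((ρ:ℝ)/(ρ':ℝ))) by
        field_simp]
      rw [← Real.rpow_def_of_pos hnr, Real.rpow_neg hnr.le]
    rw [hexp]
  -- assemble
  have hset2 := set_eq_compl_limsup c₂
  have hset1 := set_eq_compl_limsup c₁
  rw [hset2, hset1]
  have hsetdiff : ((limsup E₂ atTop)ᶜ \ (limsup E₁ atTop)ᶜ : Set (ℕ → ℝ))
      = limsup E₁ atTop \ limsup E₂ atTop := by
    ext x
    simp only [Set.mem_diff, Set.mem_compl_iff, not_not]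
    tauto
  rw [hsetdiff]
  have hLm₁ : MeasurableSet (limsup E₁ atTop) := MeasurableSet.measurableSet_limsup hE₁m
  have hLm₂ : MeasurableSet (limsup E₂ atTop) := MeasurableSet.measurableSet_limsup hE₂m
  constructor
  · rw [← prob_compl_eq_zero_iff (hLm₁.diff hLm₂)]
    have : (limsup E₁ atTop \ limsup E₂ atTop)ᶜ = (limsup E₁ atTop)ᶜ ∪ limsup E₂ atTop := by
      ext x
      simp only [Set.mem_compl_iff, Set.mem_diff, Set.mem_union, not_and, not_not]
      tauto
    rw [this]
    refine measure_union_null ?_ h20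
    rw [prob_compl_eq_zero_iff hLm₁]
    exact h11
  · exact measure_mono_null Set.diff_subset h1'0
end

section
/- Fix an integer d ≥ 0 and m > 0. For L > 0 define C_m^L := (2/π)^{d+1} · L^{−2(d+1)} · ∫_{ℝ^{d+1}} (‖p‖² + m²)^{−1} · ∏_{k=0}^{d} sin²(p_k L/2)/p_k² dp (Lebesgue integral over p = (p_0,…,p_d) ∈ ℝ^{d+1}). Then L^{d+1}·C_m^L converges to 1/m² as L → ∞. -/
open MeasureTheory Filter
open scoped Topology

open Complex
open scoped FourierTransform Real



noncomputable def triFn : ℝ → ℂ := fun ξ => ((max (1 - |ξ|) 0 : ℝ) : ℂ)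

lemma triFn_continuous : Continuous triFn :=
  Complex.continuous_ofReal.comp ((continuous_const.sub _root_.continuous_abs).max continuous_const)

lemma triFn_eq_zero {x : ℝ} (hx : x ∉ Set.Icc (-1 : ℝ) 1) : triFn x = 0 := by
  have h1 : 1 ≤ |x| := by
    rw [Set.mem_Icc, not_and_or, not_le, not_le] at hx
    rcases hx with h | h
    · calc (1:ℝ) ≤ -x := by linarith
        _ ≤ |x| := by rw [abs_eq_max_neg]; exact le_max_right _ _
    · exact h.le.trans (le_abs_self x)
  simp only [triFn, Complex.ofReal_eq_zero]
  rw [max_eq_right (by linarith)]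

lemma triFn_integrable : Integrable triFn :=
  triFn_continuous.integrable_of_hasCompactSupport
    (HasCompactSupport.intro isCompact_Icc (fun _ hx => triFn_eq_zero hx))

lemma cexp_hasDerivAt (c : ℂ) (ξ : ℝ) :
    HasDerivAt (fun t : ℝ => Complex.exp (c * t)) (c * Complex.exp (c * ξ)) ξ := by
  have h : HasDerivAt (fun t : ℝ => c * (t : ℂ)) c ξ := by
    simpa using (Complex.ofRealCLM.hasDerivAt (x := ξ)).const_mul c
  simpa [mul_comm] using h.cexp

lemma int_right (c : ℂ) (hc : c ≠ 0) :
    ∫ ξ in (0:ℝ)..1, Complex.exp (c * ξ) * (1 - ξ) =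
      (Complex.exp c - 1 - c) / c ^ 2 := by
  have hF : ∀ ξ : ℝ, HasDerivAt
      (fun t : ℝ => ((1:ℂ) - t) / c * Complex.exp (c * t) + Complex.exp (c * t) / c ^ 2)
      (Complex.exp (c * ξ) * (1 - ξ)) ξ := by
    intro ξ
    have h1 : HasDerivAt (fun t : ℝ => ((1:ℂ) - t) / c) (-1 / c) ξ := by
      have : HasDerivAt (fun t : ℝ => ((1:ℂ) - t)) (-1) ξ := by
        simpa using (Complex.ofRealCLM.hasDerivAt (x := ξ)).const_sub 1
      simpa using this.div_const c
    have h2 := cexp_hasDerivAt c ξ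
    have := (h1.mul h2).add (h2.div_const (c ^ 2))
    convert this using 1
    · rfl
    · rfl
    field_simp
    ring
  rw [intervalIntegral.integral_eq_sub_of_hasDerivAt (fun ξ _ => hF ξ)
    (((Complex.continuous_exp.comp (continuous_const.mul Complex.continuous_ofReal)).mul
      (continuous_const.sub Complex.continuous_ofReal)).intervalIntegrable _ _)]
  push_cast
  field_simp
  simp only [mul_zero, Complex.exp_zero]
  ring

lemma int_left (c : ℂ) (hc : c ≠ 0) :
    ∫ ξ in (-1:ℝ)..0, Complex.exp (c * ξ) * (1 + ξ) =
      (Complex.exp (-c) - 1 + c) / c ^ 2 := by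
  have hF : ∀ ξ : ℝ, HasDerivAt
      (fun t : ℝ => ((1:ℂ) + t) / c * Complex.exp (c * t) - Complex.exp (c * t) / c ^ 2)
      (Complex.exp (c * ξ) * (1 + ξ)) ξ := by
    intro ξ
    have h1 : HasDerivAt (fun t : ℝ => ((1:ℂ) + t) / c) (1 / c) ξ := by
      have : HasDerivAt (fun t : ℝ => ((1:ℂ) + t)) 1 ξ := by
        simpa using (Complex.ofRealCLM.hasDerivAt (x := ξ)).const_add 1
      simpa using this.div_const c
    have h2 := cexp_hasDerivAt c ξ
    have := (h1.mul h2).sub (h2.div_const (c ^ 2))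
    convert this using 1
    · rfl
    · rfl
    field_simp
    ring
  rw [intervalIntegral.integral_eq_sub_of_hasDerivAt (fun ξ _ => hF ξ)
    (((Complex.continuous_exp.comp (continuous_const.mul Complex.continuous_ofReal)).mul
      (continuous_const.add Complex.continuous_ofReal)).intervalIntegrable _ _)]
  push_cast
  field_simp
  simp only [zero_mul, Complex.exp_zero]
  ring

lemma fourier_triFn {x : ℝ} (hx : x ≠ 0) :
    𝓕 triFn x = ((Real.sin (π * x) ^ 2 / (π * x) ^ 2 : ℝ) : ℂ) := by
  have hπ : (0:ℝ) < π := Real.pi_pos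
  set c : ℂ := ((-2 * π * x : ℝ) : ℂ) * Complex.I with hc
  have hcne : c ≠ 0 := by
    apply mul_ne_zero _ Complex.I_ne_zero
    simp only [Complex.ofReal_ne_zero]
    intro h
    apply hx
    nlinarith [hπ, mul_self_nonneg x]
  have step1 : 𝓕 triFn x = ∫ v : ℝ, Complex.exp (c * v) * triFn v := by
    rw [Real.fourier_eq']
    congr 1
    ext v
    rw [smul_eq_mul]
    congr 1
    rw [hc]
    simp only [RCLike.inner_apply, conj_trivial]
    push_cast
    ring
  have step2 : (∫ v : ℝ, Complex.exp (c * v) * triFn v)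
      = ∫ v in Set.Icc (-1:ℝ) 1, Complex.exp (c * v) * triFn v := by
    exact (setIntegral_eq_integral_of_forall_compl_eq_zero
      (fun v hv => by rw [triFn_eq_zero hv, mul_zero])).symm
  have step3 : (∫ v in Set.Icc (-1:ℝ) 1, Complex.exp (c * v) * triFn v)
      = ∫ v in (-1:ℝ)..1, Complex.exp (c * v) * triFn v := by
    rw [integral_Icc_eq_integral_Ioc, intervalIntegral.integral_of_le (by norm_num : (-1:ℝ) ≤ 1)]
  have hcont : Continuous fun v : ℝ => Complex.exp (c * v) * triFn v := by
    apply (Complex.continuous_exp.comp (continuous_const.mul Complex.continuous_ofReal)).mul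
    exact Complex.continuous_ofReal.comp
      ((continuous_const.sub _root_.continuous_abs).max continuous_const)
  have step4 : (∫ v in (-1:ℝ)..1, Complex.exp (c * v) * triFn v)
      = (∫ v in (-1:ℝ)..0, Complex.exp (c * v) * triFn v)
        + ∫ v in (0:ℝ)..1, Complex.exp (c * v) * triFn v :=
    (intervalIntegral.integral_add_adjacent_intervals
      (hcont.intervalIntegrable _ _) (hcont.intervalIntegrable _ _)).symm
  have left_eq : (∫ v in (-1:ℝ)..0, Complex.exp (c * v) * triFn v)
      = (Complex.exp (-c) - 1 + c) / c ^ 2 := by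
    rw [← int_left c hcne]
    apply intervalIntegral.integral_congr
    intro ξ hξ
    rw [Set.uIcc_of_le (by norm_num : (-1:ℝ) ≤ 0), Set.mem_Icc] at hξ
    have : triFn ξ = ((1 + ξ : ℝ) : ℂ) := by
      simp only [triFn]
      rw [_root_.abs_of_nonpos hξ.2, max_eq_left (by linarith)]
      norm_num
    show Complex.exp (c * ξ) * triFn ξ = Complex.exp (c * ξ) * (1 + (ξ:ℂ))
    rw [this]; push_cast; ring
  have right_eq : (∫ v in (0:ℝ)..1, Complex.exp (c * v) * triFn v)
      = (Complex.exp c - 1 - c) / c ^ 2 := by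
    rw [← int_right c hcne]
    apply intervalIntegral.integral_congr
    intro ξ hξ
    rw [Set.uIcc_of_le (by norm_num : (0:ℝ) ≤ 1), Set.mem_Icc] at hξ
    have : triFn ξ = ((1 - ξ : ℝ) : ℂ) := by
      simp only [triFn]
      rw [_root_.abs_of_nonneg hξ.1, max_eq_left (by linarith)]
    show Complex.exp (c * ξ) * triFn ξ = Complex.exp (c * ξ) * (1 - (ξ:ℂ))
    rw [this]; push_cast; ring
  rw [step1, step2, step3, step4, left_eq, right_eq]
  -- now pure computation
  have hexp : Complex.exp c + Complex.exp (-c) = ((2 * Real.cos (2 * π * x) : ℝ) : ℂ) := by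
    have h1 : c = ((-(2 * π * x) : ℝ) : ℂ) * Complex.I := by rw [hc]; push_cast; ring
    rw [h1, show -(((-(2 * π * x) : ℝ) : ℂ) * Complex.I) = (((2 * π * x) : ℝ) : ℂ) * Complex.I by
      push_cast; ring, Complex.exp_mul_I, Complex.exp_mul_I]
    push_cast
    rw [Complex.cos_neg, Complex.sin_neg]
    ring
  have hcsq : c ^ 2 = ((-(2 * π * x) ^ 2 : ℝ) : ℂ) := by
    rw [hc]
    push_cast
    rw [mul_pow, Complex.I_sq]
    ring
  have : (Complex.exp (-c) - 1 + c) / c ^ 2 + (Complex.exp c - 1 - c) / c ^ 2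
      = (Complex.exp c + Complex.exp (-c) - 2) / c ^ 2 := by ring
  rw [this, hexp, hcsq]
  rw [show ((2 * Real.cos (2 * π * x) : ℝ) : ℂ) - 2 = ((2 * Real.cos (2 * π * x) - 2 : ℝ) : ℂ) by
    push_cast; ring]
  rw [← Complex.ofReal_div]
  congr 1
  -- real identity
  have hct : Real.cos (2 * π * x) = 1 - 2 * Real.sin (π * x) ^ 2 := by
    rw [mul_assoc, Real.cos_two_mul]
    nlinarith [Real.sin_sq_add_cos_sq (π * x)]
  rw [hct]
  have hpx : (π * x) ^ 2 ≠ 0 := by positivity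
  field_simp
  ring

lemma ae_ne_zero : ∀ᵐ x : ℝ, x ≠ 0 := by
  rw [ae_iff]
  simp only [ne_eq, not_not, Set.setOf_eq_eq_singleton]
  exact Real.volume_singleton

lemma sinc_sq_bound (x : ℝ) : Real.sin (π * x) ^ 2 / (π * x) ^ 2 ≤ 2 * (1 + x ^ 2)⁻¹ := by
  have hπ : (3:ℝ) < π := Real.pi_gt_three
  rcases eq_or_ne x 0 with rfl | hx
  · norm_num
  · rw [div_le_iff₀ (by positivity), ← div_eq_mul_inv, div_mul_eq_mul_div, le_div_iff₀ (by positivity)]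
    nlinarith [Real.sin_sq_le_sq (x := π * x),
      mul_nonneg (sub_nonneg.mpr (Real.sin_sq_le_one (π * x))) (sq_nonneg x),
      mul_nonneg (by nlinarith : (0:ℝ) ≤ π ^ 2 - 1) (sq_nonneg x)]

lemma sinc_sq_nonneg (x : ℝ) : 0 ≤ Real.sin (π * x) ^ 2 / (π * x) ^ 2 := by positivity

lemma sinc_sq_integrable : Integrable (fun x : ℝ => Real.sin (π * x) ^ 2 / (π * x) ^ 2) := by
  apply Integrable.mono' (integrable_inv_one_add_sq.const_mul 2)
  · apply Measurable.aestronglyMeasurable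
    exact ((Real.measurable_sin.comp (measurable_const_mul π)).pow_const 2).div
      ((measurable_const_mul π).pow_const 2)
  · refine ae_of_all _ fun x => ?_
    rw [Real.norm_eq_abs, _root_.abs_of_nonneg (sinc_sq_nonneg x)]
    exact sinc_sq_bound x

lemma fourier_triFn_integrable : Integrable (𝓕 triFn) := by
  apply (sinc_sq_integrable.ofReal).congr
  filter_upwards [ae_ne_zero] with x hx
  exact (fourier_triFn hx).symm

lemma integral_sinc_sq : (∫ x : ℝ, Real.sin (π * x) ^ 2 / (π * x) ^ 2) = 1 := by
  have hinv := triFn_integrable.fourierInv_fourier_eq fourier_triFn_integrable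
    (triFn_continuous.continuousAt (x := 0))
  have h0 : triFn 0 = 1 := by simp [triFn]
  rw [h0] at hinv
  rw [Real.fourierInv_eq] at hinv
  simp only [inner_zero_right, AddChar.map_zero_eq_one, one_smul] at hinv
  have heq : (∫ x : ℝ, 𝓕 triFn x) = ∫ x : ℝ, ((Real.sin (π * x) ^ 2 / (π * x) ^ 2 : ℝ) : ℂ) := by
    apply integral_congr_ae
    filter_upwards [ae_ne_zero] with x hx
    exact fourier_triFn hx
  rw [heq] at hinv
  have h2 : ((∫ x : ℝ, Real.sin (π * x) ^ 2 / (π * x) ^ 2 : ℝ) : ℂ) = 1 := by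
    rw [← Complex.coe_algebraMap, RCLike.algebraMap_eq_ofReal, ← integral_ofReal]
    exact hinv
  exact_mod_cast h2

/-- The box kernel 1D factor. -/
noncomputable def gBox : ℝ → ℝ := fun x => Real.sin (x / 2) ^ 2 / x ^ 2

lemma gBox_nonneg (x : ℝ) : 0 ≤ gBox x := by unfold gBox; positivity

lemma gBox_measurable : Measurable gBox :=
  ((Real.measurable_sin.comp (measurable_id.div_const 2)).pow_const 2).div
    (measurable_id.pow_const 2)

lemma gBox_bound (x : ℝ) : gBox x ≤ 2 * (1 + x ^ 2)⁻¹ := by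
  unfold gBox
  rcases eq_or_ne x 0 with rfl | hx
  · norm_num
  · rw [div_le_iff₀ (by positivity), ← div_eq_mul_inv, div_mul_eq_mul_div, le_div_iff₀ (by positivity)]
    nlinarith [Real.sin_sq_le_sq (x := x / 2), Real.sin_sq_le_one (x / 2), sq_nonneg x,
      mul_nonneg (sq_nonneg (Real.sin (x / 2))) (sq_nonneg x)]

lemma gBox_integrable : Integrable gBox := by
  apply Integrable.mono' (integrable_inv_one_add_sq.const_mul 2)
  · exact gBox_measurable.aestronglyMeasurable
  · refine ae_of_all _ fun x => ?_
    rw [Real.norm_eq_abs, _root_.abs_of_nonneg (gBox_nonneg x)]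
    exact gBox_bound x

lemma gBox_integral : (∫ x : ℝ, gBox x) = π / 2 := by
  have hπ : (0:ℝ) < π := Real.pi_pos
  have h := MeasureTheory.Measure.integral_comp_mul_left gBox (2 * π)
  have heq : (fun x : ℝ => gBox (2 * π * x)) = fun x : ℝ => Real.sin (π * x) ^ 2 / (π * x) ^ 2 / 4 := by
    funext x
    unfold gBox
    rw [show 2 * π * x / 2 = π * x by ring, show (2 * π * x) ^ 2 = (π * x) ^ 2 * 4 by ring,
      ← div_div]
  rw [heq] at h
  rw [integral_div, integral_sinc_sq] at h
  rw [_root_.abs_of_nonneg (by positivity : (0:ℝ) ≤ (2 * π)⁻¹), smul_eq_mul] at h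
  have h2π : (2 * π) ≠ 0 := by positivity
  field_simp at h
  linarith

/-- The common diagonal covariance `C_m^L` of a free Euclidean scalar field of mass `m`
averaged over boxes of side `L` satisfies `L^{d+1}·C_m^L → 1/m²` as `L → ∞`. -/
theorem box_covariance_large_L_limit (d : ℕ) (m : ℝ) (hm : 0 < m) :
    Tendsto (fun L : ℝ =>
        L ^ (d + 1) *
          ((2 / Real.pi) ^ (d + 1) * (1 / L ^ (2 * (d + 1))) *
            ∫ p : Fin (d + 1) → ℝ,
              (1 / ((∑ k, p k ^ 2) + m ^ 2)) *
                ∏ k, Real.sin (p k * L / 2) ^ 2 / p k ^ 2))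
      atTop (𝓝 (1 / m ^ 2)) := by
  have hπ : (0:ℝ) < π := Real.pi_pos
  have hm2 : (0:ℝ) < m ^ 2 := by positivity
  -- the product function and its properties
  have hGint : Integrable (fun q : Fin (d + 1) → ℝ => ∏ k, gBox (q k)) :=
    Integrable.fintype_prod (fun _ => gBox_integrable)
  have hGval : (∫ q : Fin (d + 1) → ℝ, ∏ k, gBox (q k)) = (π / 2) ^ (d + 1) := by
    rw [MeasureTheory.integral_fintype_prod_volume_eq_pow gBox, gBox_integral,
      Fintype.card_fin]
  have hGnonneg : ∀ q : Fin (d + 1) → ℝ, 0 ≤ ∏ k, gBox (q k) := fun q =>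
    Finset.prod_nonneg fun k _ => gBox_nonneg (q k)
  have hGmeas : Measurable (fun q : Fin (d + 1) → ℝ => ∏ k, gBox (q k)) :=
    Finset.measurable_prod _ fun k _ => gBox_measurable.comp (measurable_pi_apply k)
  -- the rescaled integrand
  set I : ℝ → ℝ := fun L => ∫ q : Fin (d + 1) → ℝ,
      (1 / ((∑ k, (L⁻¹ * q k) ^ 2) + m ^ 2)) * ∏ k, gBox (q k) with hI
  -- Step 1 : eventual equality
  have key : ∀ᶠ L : ℝ in atTop, (L ^ (d + 1) *
          ((2 / Real.pi) ^ (d + 1) * (1 / L ^ (2 * (d + 1))) *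
            ∫ p : Fin (d + 1) → ℝ,
              (1 / ((∑ k, p k ^ 2) + m ^ 2)) *
                ∏ k, Real.sin (p k * L / 2) ^ 2 / p k ^ 2))
        = (2 / π) ^ (d + 1) * I L := by
    filter_upwards [eventually_gt_atTop (0:ℝ)] with L hL
    have hLne : L ≠ 0 := hL.ne'
    have hLpow : (0:ℝ) < L ^ (d + 1) := by positivity
    have A := MeasureTheory.Measure.integral_comp_smul (volume : Measure (Fin (d + 1) → ℝ))
      (fun p : Fin (d + 1) → ℝ =>
        (1 / ((∑ k, p k ^ 2) + m ^ 2)) * ∏ k, Real.sin (p k * L / 2) ^ 2 / p k ^ 2) L⁻¹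
    rw [Module.finrank_pi, Fintype.card_fin] at A
    rw [show |(((L:ℝ)⁻¹) ^ (d + 1))⁻¹| = L ^ (d + 1) by
      rw [← inv_pow, inv_inv, abs_of_pos hLpow], smul_eq_mul] at A
    have B : (∫ q : Fin (d + 1) → ℝ, (fun p : Fin (d + 1) → ℝ =>
        (1 / ((∑ k, p k ^ 2) + m ^ 2)) * ∏ k, Real.sin (p k * L / 2) ^ 2 / p k ^ 2) (L⁻¹ • q))
        = L ^ (2 * (d + 1)) * I L := by
      rw [hI, ← MeasureTheory.integral_const_mul]
      congr 1
      funext q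
      simp only [Pi.smul_apply, smul_eq_mul]
      have hfact : ∀ y : ℝ, Real.sin (L⁻¹ * y * L / 2) ^ 2 / (L⁻¹ * y) ^ 2
          = L ^ 2 * gBox y := by
        intro y
        rw [show L⁻¹ * y * L / 2 = y / 2 by field_simp]
        unfold gBox
        rw [mul_pow, show (L⁻¹) ^ 2 * y ^ 2 = y ^ 2 / L ^ 2 by rw [inv_pow]; ring,
          div_div_eq_mul_div]
        ring
      rw [Finset.prod_congr rfl (fun k _ => hfact (q k)), Finset.prod_mul_distrib,
        Finset.prod_const, Finset.card_univ, Fintype.card_fin, ← pow_mul]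
      ring
    rw [B] at A
    -- A : L ^ (2*(d+1)) * I L = L ^ (d+1) * ∫ p, ...
    have hIf : (∫ p : Fin (d + 1) → ℝ,
        (1 / ((∑ k, p k ^ 2) + m ^ 2)) * ∏ k, Real.sin (p k * L / 2) ^ 2 / p k ^ 2)
        = L ^ (d + 1) * I L := by
      have h2 : L ^ (2 * (d + 1)) = L ^ (d + 1) * L ^ (d + 1) := by
        rw [two_mul, pow_add]
      rw [h2, mul_assoc] at A
      exact (mul_left_cancel₀ hLpow.ne' A).symm
    rw [hIf]
    have h2 : L ^ (2 * (d + 1)) = L ^ (d + 1) * L ^ (d + 1) := by rw [two_mul, pow_add]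
    field_simp [h2]
    ring
  -- Step 2 : dominated convergence
  have hDCT : Tendsto I atTop (𝓝 (∫ q : Fin (d + 1) → ℝ, (1 / m ^ 2) * ∏ k, gBox (q k))) := by
    rw [hI]
    apply tendsto_integral_filter_of_dominated_convergence
      (fun q : Fin (d + 1) → ℝ => (1 / m ^ 2) * ∏ k, gBox (q k))
    · filter_upwards with L
      apply Measurable.aestronglyMeasurable
      apply Measurable.mul _ hGmeas
      apply Measurable.div measurable_const
      apply Measurable.add _ measurable_const
      exact Finset.measurable_sum _ fun k _ =>
        ((measurable_pi_apply (X := fun _ => ℝ) k).const_mul L⁻¹).pow_const 2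
    · filter_upwards with L
      refine ae_of_all _ fun q => ?_
      have hsum : (0:ℝ) ≤ ∑ k, (L⁻¹ * q k) ^ 2 :=
        Finset.sum_nonneg fun k _ => sq_nonneg _
      rw [Real.norm_eq_abs, _root_.abs_of_nonneg
        (mul_nonneg (by positivity) (hGnonneg q))]
      gcongr
      · exact hGnonneg q
      · linarith
    · exact hGint.const_mul _
    · refine ae_of_all _ fun q => ?_
      apply Tendsto.mul_const
      have hsum : Tendsto (fun L : ℝ => (∑ k, (L⁻¹ * q k) ^ 2) + m ^ 2) atTop (𝓝 (m ^ 2)) := by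
        have h0 : Tendsto (fun L : ℝ => ∑ k, (L⁻¹ * q k) ^ 2) atTop (𝓝 0) := by
          have := tendsto_finset_sum (Finset.univ : Finset (Fin (d + 1)))
            (fun k _ => ((tendsto_inv_atTop_zero.mul_const (q k)).pow 2))
          simpa using this
        simpa using h0.add (tendsto_const_nhds (x := m ^ 2))
      exact tendsto_const_nhds.div hsum hm2.ne'
  -- conclude
  have hlim : ((2 / π) ^ (d + 1) * (∫ q : Fin (d + 1) → ℝ, (1 / m ^ 2) * ∏ k, gBox (q k)))
      = 1 / m ^ 2 := by
    rw [MeasureTheory.integral_const_mul, hGval]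
    rw [show ((2 / π) ^ (d + 1) * (1 / m ^ 2 * (π / 2) ^ (d + 1)))
        = (2 / π * (π / 2)) ^ (d + 1) * (1 / m ^ 2) by rw [mul_pow]; ring]
    rw [show (2 / π * (π / 2)) = 1 by field_simp]
    simp
  have H : Tendsto (fun L : ℝ => (2 / π) ^ (d + 1) * I L) atTop (𝓝 (1 / m ^ 2)) := by
    rw [← hlim]
    exact hDCT.const_mul _
  exact H.congr' (key.mono fun L h => h.symm)
end

section
/- Let E be a real Hilbert space, T : E → E a compact bounded linear operator, c > 0, and set M := c·Id + T. If ⟨Mx, x⟩ > 0 for every x ≠ 0, then M is invertible in the algebra of bounded operators: there exists a bounded linear operator S : E → E with M∘S = Id and S∘M = Id (in particular M is bounded, injective, surjective, and has bounded inverse). -/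
open ContinuousLinearMap

/-- If `T` is a compact operator on a real Hilbert space, `c > 0`, and `M = c·Id + T`
satisfies `⟨Mx, x⟩ > 0` for all `x ≠ 0`, then `M` is invertible in the algebra of
bounded operators. -/
theorem compact_perturbation_of_identity_invertible
    (E : Type*) [NormedAddCommGroup E] [InnerProductSpace ℝ E] [CompleteSpace E]
    (T : E →L[ℝ] E) (hT : IsCompactOperator T) (c : ℝ) (hc : 0 < c)
    (M : E →L[ℝ] E) (hM : M = c • ContinuousLinearMap.id ℝ E + T)
    (hpos : ∀ x : E, x ≠ 0 → 0 < (inner ℝ (M x) x : ℝ)) :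
    ∃ S : E →L[ℝ] E,
      M.comp S = ContinuousLinearMap.id ℝ E ∧ S.comp M = ContinuousLinearMap.id ℝ E := by
  -- M is injective
  have hker : LinearMap.ker (M : E →ₗ[ℝ] E) = ⊥ := by
    rw [LinearMap.ker_eq_bot']
    intro x hx
    by_contra hx0
    have := hpos x hx0
    rw [show M x = 0 from hx, inner_zero_left] at this
    exact lt_irrefl 0 this
  -- M is bounded below
  have hbelow : ∃ δ : ℝ, 0 < δ ∧ ∀ x : E, δ * ‖x‖ ≤ ‖M x‖ := by
    by_contra h
    push_neg at h
    -- for each n, pick a unit vector uₙ with ‖M uₙ‖ < 1/(n+1)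
    have hu : ∀ n : ℕ, ∃ u : E, ‖u‖ = 1 ∧ ‖M u‖ < 1 / (n + 1) := by
      intro n
      obtain ⟨x, hx⟩ := h (1 / (n + 1)) (by positivity)
      have hx0 : x ≠ 0 := by
        intro h0
        rw [h0] at hx
        simp at hx
      have hnx : (0:ℝ) < ‖x‖ := norm_pos_iff.mpr hx0
      refine ⟨‖x‖⁻¹ • x, ?_, ?_⟩
      · rw [norm_smul, norm_inv, norm_norm, inv_mul_cancel₀ (norm_ne_zero_iff.mpr hx0)]
      · rw [map_smul, norm_smul, norm_inv, norm_norm]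
        calc ‖x‖⁻¹ * ‖M x‖ < ‖x‖⁻¹ * (1 / (n + 1) * ‖x‖) := by
              exact mul_lt_mul_of_pos_left hx (by positivity)
          _ = 1 / (n + 1) := by
              field_simp
    choose u hu1 hu2 using hu
    -- T maps the unit sphere into a compact set
    obtain ⟨K, hK, hKT⟩ := hT.image_subset_compact_of_bounded
      (Metric.isBounded_closedBall (x := (0 : E)) (r := 1))
    have hmem : ∀ n, T (u n) ∈ K := fun n =>
      hKT ⟨u n, by simp [Metric.mem_closedBall, (hu1 n).le], rfl⟩
    obtain ⟨y, -, φ, hφ, hconv⟩ := hK.tendsto_subseq hmem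
    -- M (u (φ n)) → 0
    have hM0 : Filter.Tendsto (fun n => M (u (φ n))) Filter.atTop (nhds 0) := by
      rw [tendsto_iff_norm_sub_tendsto_zero]
      simp only [sub_zero]
      apply squeeze_zero (fun n => norm_nonneg _) (fun n => (hu2 (φ n)).le)
      have : Filter.Tendsto (fun n : ℕ => 1 / ((n : ℝ) + 1)) Filter.atTop (nhds 0) :=
        tendsto_one_div_add_atTop_nhds_zero_nat
      exact this.comp hφ.tendsto_atTop
    -- u (φ n) = c⁻¹ • (M (u (φ n)) - T (u (φ n)))
    have hrep : ∀ n, u (φ n) = c⁻¹ • (M (u (φ n)) - T (u (φ n))) := by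
      intro n
      rw [hM]
      simp only [add_apply, coe_smul', Pi.smul_apply, coe_id', id_eq]
      rw [add_sub_cancel_right, smul_smul, inv_mul_cancel₀ hc.ne', one_smul]
    have hulim : Filter.Tendsto (fun n => u (φ n)) Filter.atTop (nhds (c⁻¹ • (0 - y))) := by
      rw [funext hrep]
      exact ((hM0.sub hconv).const_smul _)
    set x : E := c⁻¹ • (0 - y) with hxdef
    have hxnorm : ‖x‖ = 1 := by
      have := (continuous_norm.tendsto x).comp hulim
      have h1 : Filter.Tendsto (fun n => ‖u (φ n)‖) Filter.atTop (nhds 1) := by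
        simpa [hu1] using Filter.tendsto_const_nhds (x := (1:ℝ)) (f := Filter.atTop (α := ℕ))
      exact tendsto_nhds_unique this h1
    have hMx : M x = 0 := by
      have := (M.continuous.tendsto x).comp hulim
      exact tendsto_nhds_unique this hM0
    have hx0 : x ≠ 0 := by
      intro h0; rw [h0, norm_zero] at hxnorm; norm_num at hxnorm
    have := hpos x hx0
    rw [hMx, inner_zero_left] at this
    exact lt_irrefl 0 this
  obtain ⟨δ, hδ, hδM⟩ := hbelow
  -- antilipschitz
  have hanti : AntilipschitzWith ⟨δ⁻¹, by positivity⟩ M := by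
    apply M.antilipschitz_of_bound
    intro x
    show ‖x‖ ≤ δ⁻¹ * ‖M x‖
    have h1 := hδM x
    have h2 : δ⁻¹ * (δ * ‖x‖) ≤ δ⁻¹ * ‖M x‖ := by
      apply mul_le_mul_of_nonneg_left h1 (by positivity)
    rwa [← mul_assoc, inv_mul_cancel₀ hδ.ne', one_mul] at h2
  -- range is closed
  have hclosed : IsClosed (LinearMap.range (M : E →ₗ[ℝ] E) : Set E) := by
    have := hanti.isClosed_range M.uniformContinuous
    convert this using 1
    exact LinearMap.coe_range _
  -- range is dense: its orthogonal complement is trivial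
  have horth : (LinearMap.range (M : E →ₗ[ℝ] E))ᗮ = ⊥ := by
    rw [Submodule.eq_bot_iff]
    intro y hy
    by_contra hy0
    have h1 : (inner ℝ (M y) y : ℝ) = 0 := by
      simpa [real_inner_comm] using hy (M y) ⟨y, rfl⟩
    exact absurd h1 (ne_of_gt (hpos y hy0))
  have : CompleteSpace (LinearMap.range (M : E →ₗ[ℝ] E)) := hclosed.completeSpace_coe
  have hrange : LinearMap.range (M : E →ₗ[ℝ] E) = ⊤ := by
    rwa [Submodule.orthogonal_eq_bot_iff] at horth
  let e := ContinuousLinearEquiv.ofBijective M hker hrange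
  refine ⟨e.symm.toContinuousLinearMap, ?_, ?_⟩
  · ext x
    simp only [coe_comp', Function.comp_apply, ContinuousLinearEquiv.coe_coe, coe_id', id_eq]
    have : M (e.symm x) = e (e.symm x) := by
      rw [ContinuousLinearEquiv.coeFn_ofBijective]
    rw [this, e.apply_symm_apply]
  · ext x
    simp only [coe_comp', Function.comp_apply, ContinuousLinearEquiv.coe_coe, coe_id', id_eq]
    have : M x = e x := by rw [ContinuousLinearEquiv.coeFn_ofBijective]
    rw [this, e.symm_apply_apply]
end

section
/- Suppose G is nontrivial (has at least two elements). Then the set of all maps g : [0,1] → G that are continuous at at least one point s₀ ∈ [0,1] has ν-measure zero; equivalently, ν is supported on the set of maps g : [0,1] → G that are discontinuous at every point of [0,1]. -/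
open MeasureTheory
open scoped unitInterval Pointwise

/-- `ν` is the product over the unit interval of copies of the measure `μH` on `G`:
all its finite-dimensional marginals are the corresponding finite products.  This
property determines `ν` uniquely on the product σ-algebra. -/
def IsHaarProduct {G : Type*} [MeasurableSpace G] (μH : Measure G)
    (ν : Measure (I → G)) : Prop :=
  ∀ (s : Finset I) (A : I → Set G), (∀ i ∈ s, MeasurableSet (A i)) →
    ν {g : I → G | ∀ i ∈ s, g i ∈ A i} = ∏ i ∈ s, μH (A i)

lemma aux_null {G : Type*} [MeasurableSpace G] (μH : Measure G)
    (ν : Measure (I → G)) (hν : IsHaarProduct μH ν)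
    {J : Set I} (hJ : J.Infinite) {B : Set G} (hB : MeasurableSet B) (hc : μH B < 1) :
    ν {g : I → G | ∀ s ∈ J, g s ∈ B} = 0 := by
  have hk : ∀ k : ℕ, ν {g : I → G | ∀ s ∈ J, g s ∈ B} ≤ μH B ^ k := by
    intro k
    obtain ⟨F, hFJ, hFcard⟩ := hJ.exists_subset_card_eq k
    calc ν {g : I → G | ∀ s ∈ J, g s ∈ B}
        ≤ ν {g : I → G | ∀ i ∈ F, g i ∈ B} := by
          apply measure_mono; intro g hg i hi; exact hg i (hFJ hi)
      _ = ∏ i ∈ F, μH B := hν F (fun _ => B) (fun i _ => hB)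
      _ = μH B ^ k := by rw [Finset.prod_const, hFcard]
  have h0 := ENNReal.tendsto_pow_atTop_nhds_zero_of_lt_one hc
  exact le_antisymm (ge_of_tendsto h0 (Filter.Eventually.of_forall hk)) (zero_le)

/-- For a nontrivial compact group `G` with Haar probability measure `μH`, the set of maps
`[0,1] → G` continuous at at least one point has outer measure zero for the product
measure `ν`. -/
theorem continuousAt_somewhere_measure_zero
    (G : Type*) [Group G] [TopologicalSpace G] [IsTopologicalGroup G]
    [CompactSpace G] [T2Space G] [MeasurableSpace G] [BorelSpace G] [Nontrivial G]
    (μH : Measure G) [μH.IsHaarMeasure] [IsProbabilityMeasure μH]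
    (ν : Measure (I → G)) (hν : IsHaarProduct μH ν) :
    ν {g : I → G | ∃ s₀ : I, ContinuousAt g s₀} = 0 := by
  classical
  obtain ⟨a, ha⟩ := exists_ne (1 : G)
  have hU : ({a}ᶜ : Set G) ∈ nhds (1 : G) :=
    isOpen_compl_singleton.mem_nhds (by simpa using (Ne.symm ha))
  obtain ⟨V₁, hV₁o, hV₁1, hV₁⟩ := exists_open_nhds_one_mul_subset hU
  obtain ⟨V₂, hV₂o, hV₂1, hV₂⟩ := exists_open_nhds_one_mul_subset (hV₁o.mem_nhds hV₁1)
  set W : Set G := V₂ ∩ V₂⁻¹ with hWdef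
  have hWo : IsOpen W := hV₂o.inter hV₂o.inv
  have hW1 : (1 : G) ∈ W := ⟨hV₂1, by simpa using hV₂1⟩
  have hWV : W ⊆ V₂ := Set.inter_subset_left
  have hWinv : ∀ w ∈ W, w⁻¹ ∈ W := by
    rintro w ⟨h1, h2⟩
    exact ⟨h2, by simpa using h1⟩
  -- a is not a product of four elements of W
  have hW4 : ∀ w₁ ∈ W, ∀ w₂ ∈ W, ∀ w₃ ∈ W, ∀ w₄ ∈ W, w₁ * w₂ * w₃ * w₄ ≠ a := by
    intro w₁ h1 w₂ h2 w₃ h3 w₄ h4 heq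
    have : w₁ * w₂ * w₃ * w₄ ∈ V₁ * V₁ := by
      have p1 : w₁ * w₂ ∈ V₁ := hV₂ (Set.mul_mem_mul (hWV h1) (hWV h2))
      have p2 : w₃ * w₄ ∈ V₁ := hV₂ (Set.mul_mem_mul (hWV h3) (hWV h4))
      have := Set.mul_mem_mul p1 p2
      simpa [mul_assoc] using this
    have := hV₁ this
    rw [heq] at this
    exact this rfl
  set B : Set G := W * W * W with hBdef
  have hBo : IsOpen B := hWo.mul_left
  have hBm : MeasurableSet B := hBo.measurableSet
  have hWpos : 0 < μH W := hWo.measure_pos μH ⟨1, hW1⟩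
  -- B and a • W are disjoint
  have hdisj : Disjoint B (a • W) := by
    rw [Set.disjoint_left]
    rintro x hxB ⟨w, hw, hxa⟩
    rw [hBdef] at hxB
    obtain ⟨y, hy, w₃, h3, hx⟩ := hxB
    obtain ⟨w₁, h1, w₂, h2, rfl⟩ := hy
    have heq : w₁ * w₂ * w₃ * w⁻¹ = a := by
      have h' : a * w = w₁ * w₂ * w₃ := by
        rw [← hx] at hxa; simpa [smul_eq_mul] using hxa
      rw [← h']; group
    exact hW4 w₁ h1 w₂ h2 w₃ h3 w⁻¹ (hWinv w hw) heq
  have hBlt : μH B < 1 := by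
    have hsum : μH B + μH (a • W) ≤ 1 := by
      rw [← measure_union hdisj ((hWo.smul a).measurableSet)]
      simpa using prob_le_one
    have hsm : μH (a • W) = μH W := measure_smul μH a W
    have hBne : μH B ≠ ⊤ := (lt_of_le_of_lt (le_trans le_self_add hsum) (by norm_num)).ne
    calc μH B < μH B + μH (a • W) :=
          ENNReal.lt_add_right hBne (by rw [hsm]; exact hWpos.ne')
      _ ≤ 1 := hsum
  -- finite cover of G by translates of W
  obtain ⟨T, hT⟩ := IsCompact.elim_finite_subcover isCompact_univ (fun x : G => x • W)
    (fun x => hWo.smul x) (by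
      intro x _
      exact Set.mem_iUnion.2 ⟨x, ⟨1, hW1, mul_one x⟩⟩)
  -- the bad sets
  set Jset : ℚ × ℚ → Set I := fun p => {s : I | (p.1 : ℝ) ≤ ↑s ∧ (↑s : ℝ) ≤ p.2} with hJdef
  set S : ℚ × ℚ → G → Set (I → G) := fun p x =>
    {g : I → G | ∀ s ∈ Jset p, g s ∈ x • B} with hSdef
  have hSnull : ∀ (p : ℚ × ℚ), max p.1 0 < min p.2 1 → ∀ x : G, ν (S p x) = 0 := by
    intro p hp x
    have hαβ : (max (p.1 : ℝ) 0) < min (p.2 : ℝ) 1 := by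
      have := hp; push_cast at this ⊢; exact_mod_cast this
    have hJ : (Jset p).Infinite := by
      apply Set.Infinite.of_image (Subtype.val)
      refine Set.Infinite.mono ?_ (Set.Icc_infinite hαβ)
      rintro y ⟨hy1, hy2⟩
      have hyI : y ∈ I := ⟨le_trans (le_max_right _ _) hy1, le_trans hy2 (min_le_right _ _)⟩
      exact ⟨⟨y, hyI⟩, ⟨le_trans (le_max_left _ _) hy1, le_trans hy2 (min_le_left _ _)⟩, rfl⟩
    have hxBlt : μH (x • B) < 1 := by rw [measure_smul μH x B]; exact hBlt
    exact aux_null μH ν hν hJ ((hBo.smul x).measurableSet) hxBlt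
  -- covering
  have hcover : {g : I → G | ∃ s₀ : I, ContinuousAt g s₀} ⊆
      ⋃ q : {p : ℚ × ℚ // max p.1 0 < min p.2 1} × {x // x ∈ T}, S q.1.1 q.2.1 := by
    rintro g ⟨s₀, hg⟩
    have hmem : g s₀ ∈ ⋃ x ∈ T, x • W := hT (Set.mem_univ _)
    rw [Set.mem_iUnion₂] at hmem
    obtain ⟨x, hxT, hgx⟩ := hmem
    have hnb : g ⁻¹' (g s₀ • W) ∈ nhds s₀ :=
      hg.preimage_mem_nhds ((hWo.smul (g s₀)).mem_nhds ⟨1, hW1, mul_one _⟩)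
    obtain ⟨ε, hε, hball⟩ := Metric.mem_nhds_iff.1 hnb
    obtain ⟨q₁, hq₁⟩ := exists_rat_btwn (show (↑s₀ : ℝ) - ε < ↑s₀ by linarith)
    obtain ⟨q₂, hq₂⟩ := exists_rat_btwn (show (↑s₀ : ℝ) < ↑s₀ + ε by linarith)
    have hs₀0 : (0 : ℝ) ≤ ↑s₀ := s₀.2.1
    have hs₀1 : (↑s₀ : ℝ) ≤ 1 := s₀.2.2
    have hq12 : q₁ < q₂ := by exact_mod_cast hq₁.2.trans hq₂.1
    have hq11 : q₁ < 1 := by exact_mod_cast hq₁.2.trans_le hs₀1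
    have hq20 : (0 : ℚ) < q₂ := by exact_mod_cast lt_of_le_of_lt hs₀0 hq₂.1
    have hP : max q₁ 0 < min q₂ 1 :=
      max_lt (lt_min hq12 hq11) (lt_min hq20 zero_lt_one)
    refine Set.mem_iUnion.2 ⟨⟨⟨(q₁, q₂), hP⟩, ⟨x, hxT⟩⟩, ?_⟩
    rintro s ⟨hs1, hs2⟩
    have hsball : s ∈ Metric.ball s₀ ε := by
      rw [Metric.mem_ball, Subtype.dist_eq, Real.dist_eq, abs_lt]
      constructor <;> [linarith [hq₁.1]; linarith [hq₂.2]]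
    obtain ⟨w, hw, hgseq⟩ := hball hsball
    obtain ⟨w', hw', hgx'⟩ := hgx
    refine ⟨w' * w * 1, Set.mul_mem_mul (Set.mul_mem_mul hw' hw) hW1, ?_⟩
    simp only [smul_eq_mul] at hgseq hgx' ⊢
    rw [← hgseq, ← hgx']
    group
  refine measure_mono_null hcover (measure_iUnion_null fun q => hSnull q.1.1 q.1.2 q.2.1)
end

section
/- Let U ⊆ G be a Borel subset with 0 < μ_H(U) < 1. Then the set Θ_U := { g : [0,1] → G : there exists a nonempty open subset I of [0,1] with g(I) ⊆ U } has ν-measure zero, i.e., Θ_U is contained in a measurable set of ν-measure zero. -/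
open MeasureTheory
open scoped unitInterval

/-- If `e : ℕ → I` is injective, the set of `g` mapping every `e n` into `U` is null. -/
lemma nu_seq_null {G : Type*} [MeasurableSpace G]
    (μH : Measure G) (ν : Measure (I → G)) (hν : IsHaarProduct μH ν)
    (U : Set G) (hU : MeasurableSet U) (hU1 : μH U < 1)
    (e : ℕ ↪ I) : ν {g : I → G | ∀ n : ℕ, g (e n) ∈ U} = 0 := by
  have key : ∀ m : ℕ, ν {g : I → G | ∀ n : ℕ, g (e n) ∈ U} ≤ (μH U) ^ m := by
    intro m
    set s : Finset I := (Finset.range m).map e with hs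
    have h1 : ν {g : I → G | ∀ i ∈ s, g i ∈ U} = ∏ _i ∈ s, μH U :=
      hν s (fun _ => U) (fun _ _ => hU)
    have h2 : ∏ _i ∈ s, μH U = (μH U) ^ m := by
      rw [Finset.prod_const, hs, Finset.card_map, Finset.card_range]
    calc ν {g : I → G | ∀ n : ℕ, g (e n) ∈ U}
        ≤ ν {g : I → G | ∀ i ∈ s, g i ∈ U} := by
          apply measure_mono
          intro g hg i hi
          rw [hs, Finset.mem_map] at hi
          obtain ⟨n, _, rfl⟩ := hi
          exact hg n
      _ = (μH U) ^ m := by rw [h1, h2]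
  have hle : ν {g : I → G | ∀ n : ℕ, g (e n) ∈ U} ≤ 0 :=
    ge_of_tendsto' (ENNReal.tendsto_pow_atTop_nhds_zero_of_lt_one hU1) key
  exact le_antisymm hle zero_le

/-- For a Borel set `U ⊆ G` with `0 < μH U < 1`, the set `Θ_U` of maps sending some
nonempty open subset of `[0,1]` into `U` has outer measure zero for the product
measure `ν`. -/
theorem theta_measure_zero
    (G : Type*) [Group G] [TopologicalSpace G] [IsTopologicalGroup G]
    [CompactSpace G] [T2Space G] [MeasurableSpace G] [BorelSpace G]
    (μH : Measure G) [μH.IsHaarMeasure] [IsProbabilityMeasure μH]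
    (ν : Measure (I → G)) (hν : IsHaarProduct μH ν)
    (U : Set G) (hU : MeasurableSet U) (hU0 : 0 < μH U) (hU1 : μH U < 1) :
    ν {g : I → G | ∃ J : Set I, IsOpen J ∧ J.Nonempty ∧ g '' J ⊆ U} = 0 := by
  obtain ⟨B, hBc, hBne, hBbasis⟩ := TopologicalSpace.exists_countable_basis I
  set M : Set I → Set (I → G) := fun b => {g : I → G | ∀ x ∈ b, g x ∈ U} with hM
  have hsub : {g : I → G | ∃ J : Set I, IsOpen J ∧ J.Nonempty ∧ g '' J ⊆ U}
      ⊆ ⋃ b ∈ B, M b := by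
    rintro g ⟨J, hJo, ⟨x, hx⟩, hJU⟩
    obtain ⟨b, hbB, hxb, hbJ⟩ := hBbasis.exists_subset_of_mem_open hx hJo
    refine Set.mem_biUnion hbB ?_
    intro y hy
    exact hJU ⟨y, hbJ hy, rfl⟩
  refine measure_mono_null hsub ?_
  rw [measure_biUnion_null_iff hBc]
  intro b hbB
  have hbne : b.Nonempty := Set.nonempty_iff_ne_empty.mpr (fun h => hBne (h ▸ hbB))
  obtain ⟨x, hx⟩ := hbne
  have hbinf : b.Infinite :=
    infinite_of_mem_nhds x ((hBbasis.isOpen hbB).mem_nhds hx)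
  set e' : ℕ ↪ b := hbinf.natEmbedding
  set e : ℕ ↪ I := e'.trans (Function.Embedding.subtype _)
  have hnull := nu_seq_null μH ν hν U hU hU1 e
  refine measure_mono_null ?_ hnull
  intro g hg n
  exact hg (e n) (e' n).2
end
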